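/- arXiv:1008.3217 — 7 statements merged into one kernel-verified Lean document; each statement's English description precedes it below -/
import Mathlib

section
/- Let G be a graph admitting an SEDF f, and suppose G contains a cycle C_n as a subgraph with vertices v_1, ..., v_n. Then Σ_{i=1}^{n} s_{v_i} ≥ 0. -/
open scoped Classical

noncomputable def edgeFin {V : Type*} [Fintype V] (G : SimpleGraph V) : Finset (Sym2 V) :=
  Finset.univ.filter (· ∈ G.edgeSet)

noncomputable def closedNbhd {V : Type*} [Fintype V] (G : SimpleGraph V) (e : Sym2 V) :
    Finset (Sym2 V) :=
  (edgeFin G).filter (fun e' => ∃ v, v ∈ e ∧ v ∈ e')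

def IsSEDF {V : Type*} [Fintype V] (G : SimpleGraph V) (f : Sym2 V → ℤ) : Prop :=
  (∀ e ∈ edgeFin G, f e = 1 ∨ f e = -1) ∧
  ∀ e ∈ edgeFin G, 1 ≤ ∑ e' ∈ closedNbhd G e, f e'

noncomputable def vsum {V : Type*} [Fintype V] (G : SimpleGraph V) (f : Sym2 V → ℤ) (v : V) : ℤ :=
  ∑ e ∈ (edgeFin G).filter (fun e => v ∈ e), f e

noncomputable def gammaS {V : Type*} [Fintype V] (G : SimpleGraph V) : ℤ :=
  sInf {z : ℤ | ∃ f, IsSEDF G f ∧ z = ∑ e ∈ edgeFin G, f e}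

def IsLGraph {V : Type*} [Fintype V] (m n : ℕ) (G : SimpleGraph V) : Prop :=
  Fintype.card V = (n + 1) * (m * n + m + 1) ∧
  ∃ P : Fin (n + 1) → Finset V,
    (∀ v : V, ∃! i, v ∈ P i) ∧
    (∀ i, (P i).card = m * n + m + 1) ∧
    (∀ u ∈ P 0, ∀ v ∈ P 0, u ≠ v → G.Adj u v) ∧
    (∀ i, i ≠ 0 → ∀ u ∈ P i, ∀ v ∈ P i, ¬ G.Adj u v) ∧
    (∀ i, i ≠ 0 → ∀ v ∈ P i, ((P 0).filter (G.Adj v)).card = m) ∧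
    (∀ i, i ≠ 0 → ∀ v ∈ P 0, ((P i).filter (G.Adj v)).card = m) ∧
    (∀ i j, i ≠ 0 → j ≠ 0 → i ≠ j → ∀ u ∈ P i, ∀ v ∈ P j, ¬ G.Adj u v)

def MConnected {V : Type*} [Fintype V] (m : ℕ) (G : SimpleGraph V) : Prop :=
  m < Fintype.card V ∧
  ∀ S : Finset V, S.card < m → (G.induce ((↑S : Set V)ᶜ)).Connected

def IsElementary {V : Type*} (H : SimpleGraph V) : Prop :=
  (∀ v, (H.neighborSet v).ncard ≤ 2) ∧
  ∀ v, (H.neighborSet v).ncard = 1 → ∀ w, H.Adj v w → (H.neighborSet w).ncard = 1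

lemma nbhd_sum_eq {V : Type*} [Fintype V] (G : SimpleGraph V) (f : Sym2 V → ℤ)
    {a b : V} (hab : G.Adj a b) :
    ∑ e' ∈ closedNbhd G s(a, b), f e' = vsum G f a + vsum G f b - f s(a, b) := by
  have hne : a ≠ b := hab.ne
  have hmem : s(a, b) ∈ edgeFin G := by
    simp [edgeFin, SimpleGraph.mem_edgeSet, hab]
  have hfilt : closedNbhd G s(a, b) =
      (edgeFin G).filter (fun e' => a ∈ e') ∪ (edgeFin G).filter (fun e' => b ∈ e') := by
    rw [closedNbhd, ← Finset.filter_or]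
    apply Finset.filter_congr
    intro e' _
    simp only [Sym2.mem_iff]
    constructor
    · rintro ⟨v, hv | hv, hv'⟩
      · exact Or.inl (hv ▸ hv')
      · exact Or.inr (hv ▸ hv')
    · rintro (h | h)
      · exact ⟨a, Or.inl rfl, h⟩
      · exact ⟨b, Or.inr rfl, h⟩
  have hinter : (edgeFin G).filter (fun e' => a ∈ e') ∩ (edgeFin G).filter (fun e' => b ∈ e')
      = {s(a, b)} := by
    rw [← Finset.filter_and]
    ext e'
    simp only [Finset.mem_filter, Finset.mem_singleton]
    constructor
    · rintro ⟨_, h1, h2⟩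
      exact (Sym2.mem_and_mem_iff hne).mp ⟨h1, h2⟩
    · rintro rfl
      exact ⟨hmem, by simp, by simp⟩
  have key : ∑ e' ∈ (edgeFin G).filter (fun e' => a ∈ e') ∪
        (edgeFin G).filter (fun e' => b ∈ e'), f e' +
      ∑ e' ∈ (edgeFin G).filter (fun e' => a ∈ e') ∩
        (edgeFin G).filter (fun e' => b ∈ e'), f e' =
      ∑ e' ∈ (edgeFin G).filter (fun e' => a ∈ e'), f e' +
      ∑ e' ∈ (edgeFin G).filter (fun e' => b ∈ e'), f e' :=
    Finset.sum_union_inter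
  rw [hinter, Finset.sum_singleton] at key
  rw [hfilt]
  unfold vsum
  linarith

theorem stmt2 {V : Type*} [Fintype V] (G : SimpleGraph V) (f : Sym2 V → ℤ)
    (hf : IsSEDF G f) (n : ℕ) (hn : 3 ≤ n) (c : Fin n → V)
    (hinj : Function.Injective c)
    (hcyc : ∀ i : Fin n, G.Adj (c i) (c (i + ⟨1, by omega⟩))) :
    0 ≤ ∑ i : Fin n, vsum G f (c i) := by
  haveI : NeZero n := ⟨by omega⟩
  set one : Fin n := ⟨1, by omega⟩
  have hedge : ∀ i : Fin n, s(c i, c (i + one)) ∈ edgeFin G := by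
    intro i
    simp [edgeFin, SimpleGraph.mem_edgeSet, hcyc i]
  -- each closed nbhd sum ≥ 1
  have h1 : ∀ i : Fin n, (1 : ℤ) ≤
      vsum G f (c i) + vsum G f (c (i + one)) - f s(c i, c (i + one)) := by
    intro i
    have := hf.2 _ (hedge i)
    rwa [nbhd_sum_eq G f (hcyc i)] at this
  have hsum : (n : ℤ) ≤ ∑ i : Fin n,
      (vsum G f (c i) + vsum G f (c (i + one)) - f s(c i, c (i + one))) := by
    calc (n : ℤ) = ∑ _i : Fin n, (1 : ℤ) := by simp
    _ ≤ _ := Finset.sum_le_sum (fun i _ => h1 i)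
  have hshift : ∑ i : Fin n, vsum G f (c (i + one)) = ∑ i : Fin n, vsum G f (c i) := by
    exact Fintype.sum_equiv (Equiv.addRight one) _ _ (fun i => rfl)
  have hfe : ∀ i : Fin n, (-1 : ℤ) ≤ f s(c i, c (i + one)) := by
    intro i
    rcases hf.1 _ (hedge i) with h | h <;> rw [h] <;> norm_num
  have hfesum : (-(n : ℤ)) ≤ ∑ i : Fin n, f s(c i, c (i + one)) := by
    calc (-(n : ℤ)) = ∑ _i : Fin n, (-1 : ℤ) := by simp
    _ ≤ _ := Finset.sum_le_sum (fun i _ => hfe i)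
  rw [Finset.sum_sub_distrib, Finset.sum_add_distrib, hshift] at hsum
  linarith
end

section
/- Let m, n be natural numbers and G an L_(m,n)-graph. Then the signed edge domination number of G satisfies γ'_s(G) ≤ (mn+m+1)(m−mn)/2. -/
open scoped Classical

section Helpers
variable {V : Type*} [Fintype V] (G : SimpleGraph V)

lemma mem_edgeFin {e : Sym2 V} : e ∈ edgeFin G ↔ e ∈ G.edgeSet := by simp [edgeFin]

lemma incid_eq (v : V) :
    (edgeFin G).filter (fun e => v ∈ e) = (G.neighborFinset v).image (fun w => s(v, w)) := by
  ext e
  simp only [Finset.mem_filter, mem_edgeFin, Finset.mem_image, SimpleGraph.mem_neighborFinset]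
  constructor
  · rintro ⟨he, hv⟩
    induction e using Sym2.ind with
    | _ a b =>
      rw [SimpleGraph.mem_edgeSet] at he
      rcases Sym2.mem_iff.mp hv with h1 | h1 <;> subst h1
      · exact ⟨b, he, rfl⟩
      · exact ⟨a, he.symm, Sym2.eq_swap⟩
  · rintro ⟨w, hw, rfl⟩
    exact ⟨(SimpleGraph.mem_edgeSet G).mpr hw, by simp⟩

lemma vsum_eq (f : Sym2 V → ℤ) (v : V) :
    vsum G f v = ∑ w ∈ G.neighborFinset v, f s(v, w) := by
  rw [vsum, incid_eq, Finset.sum_image]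
  intro a _ b _ h
  rcases Sym2.eq_iff.mp h with ⟨_, h⟩ | ⟨h1, h2⟩
  · exact h
  · exact h2.trans h1

lemma handshake (f : Sym2 V → ℤ) :
    ∑ v, vsum G f v = 2 * ∑ e ∈ edgeFin G, f e := by
  unfold vsum
  simp only [Finset.sum_filter]
  rw [Finset.sum_comm, Finset.mul_sum]
  refine Finset.sum_congr rfl ?_
  intro e he
  rw [mem_edgeFin] at he
  induction e using Sym2.ind with
  | _ a b =>
    have hab : a ≠ b := ((SimpleGraph.mem_edgeSet G).mp he).ne
    have hfil : (Finset.univ.filter (fun v => v ∈ s(a, b))) = {a, b} := by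
      ext x; simp [Sym2.mem_iff]
    rw [← Finset.sum_filter, hfil, Finset.sum_pair hab, two_mul]

lemma closedNbhd_sum (f : Sym2 V → ℤ) {u v : V} (h : G.Adj u v) :
    ∑ e' ∈ closedNbhd G s(u, v), f e' = vsum G f u + vsum G f v - f s(u, v) := by
  have hunion : closedNbhd G s(u, v) =
      (edgeFin G).filter (fun e => u ∈ e) ∪ (edgeFin G).filter (fun e => v ∈ e) := by
    ext e
    simp only [closedNbhd, Finset.mem_filter, Finset.mem_union]
    constructor
    · rintro ⟨he, x, hx, hxe⟩
      rcases Sym2.mem_iff.mp hx with rfl | rfl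
      · exact Or.inl ⟨he, hxe⟩
      · exact Or.inr ⟨he, hxe⟩
    · rintro (⟨he, hx⟩ | ⟨he, hx⟩)
      exacts [⟨he, u, by simp, hx⟩, ⟨he, v, by simp, hx⟩]
  have hinter : (edgeFin G).filter (fun e => u ∈ e) ∩ (edgeFin G).filter (fun e => v ∈ e)
      = {s(u, v)} := by
    ext e
    simp only [Finset.mem_inter, Finset.mem_filter, Finset.mem_singleton]
    constructor
    · rintro ⟨⟨he, hu⟩, ⟨_, hv⟩⟩
      exact (Sym2.mem_and_mem_iff h.ne).mp ⟨hu, hv⟩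
    · rintro rfl
      exact ⟨⟨(mem_edgeFin G).mpr h, by simp⟩, ⟨(mem_edgeFin G).mpr h, by simp⟩⟩
  have key := Finset.sum_union_inter (s₁ := (edgeFin G).filter (fun e => u ∈ e))
    (s₂ := (edgeFin G).filter (fun e => v ∈ e)) (f := f)
  rw [hinter, Finset.sum_singleton] at key
  rw [hunion, vsum, vsum]
  linarith

end Helpers

theorem stmt4 {V : Type*} [Fintype V] (m n : ℕ) (G : SimpleGraph V)
    (hG : IsLGraph m n G) :
    (gammaS G : ℚ) ≤ ((m : ℚ) * n + m + 1) * ((m : ℚ) - m * n) / 2 := by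
  obtain ⟨hcardV, P, hpart, hcard, hclique, hindep, hdegV, hdeg0, hcross⟩ := hG
  set f : Sym2 V → ℤ := fun e => if ∀ x ∈ e, x ∈ P 0 then 1 else -1 with hf
  have hfs : ∀ u w : V, f s(u, w) = if u ∈ P 0 ∧ w ∈ P 0 then 1 else -1 := by
    intro u w
    have hiff : (∀ x ∈ s(u, w), x ∈ P 0) ↔ (u ∈ P 0 ∧ w ∈ P 0) := by
      constructor
      · intro h; exact ⟨h u (by simp), h w (by simp)⟩
      · rintro ⟨h1, h2⟩ x hx
        rcases Sym2.mem_iff.mp hx with rfl | rfl <;> assumption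
    simp only [hf, hiff]
  have hdisj : ∀ {i j : Fin (n + 1)} {w : V}, w ∈ P i → w ∈ P j → i = j := by
    intro i j w hi hj
    obtain ⟨k, _, hk⟩ := hpart w
    rw [hk i hi, hk j hj]
  have hAe : ∀ {i}, i ≠ 0 → ∀ {w : V}, w ∈ P i → w ∉ P 0 := by
    intro i hi w hw hA
    exact hi (hdisj hw hA)
  -- neighbors of an outer vertex
  have hnbr : ∀ i, i ≠ 0 → ∀ v ∈ P i, G.neighborFinset v = (P 0).filter (G.Adj v) := by
    intro i hi v hv
    ext w
    simp only [SimpleGraph.mem_neighborFinset, Finset.mem_filter]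
    constructor
    · intro hadj
      obtain ⟨j, hj, _⟩ := hpart w
      by_cases hj0 : j = 0
      · exact ⟨hj0 ▸ hj, hadj⟩
      · by_cases hij : i = j
        · exact absurd hadj (hindep i hi v hv w (hij ▸ hj))
        · exact absurd hadj (hcross i j hi hj0 hij v hv w hj)
    · exact fun h => h.2
  have hvsumO : ∀ i, i ≠ 0 → ∀ v ∈ P i, vsum G f v = -m := by
    intro i hi v hv
    rw [vsum_eq, hnbr i hi v hv]
    have hval : ∀ w ∈ (P 0).filter (G.Adj v), f s(v, w) = -1 := by
      intro w hw
      rw [hfs, if_neg]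
      rintro ⟨h1, _⟩
      exact hAe hi hv h1
    rw [Finset.sum_congr rfl hval, Finset.sum_const, hdegV i hi v hv]
    simp
  have hvsumA : ∀ u ∈ P 0, vsum G f u = m := by
    intro u hu
    rw [vsum_eq]
    rw [← Finset.sum_filter_add_sum_filter_not (G.neighborFinset u) (· ∈ P 0)]
    have h1 : (G.neighborFinset u).filter (· ∈ P 0) = (P 0).erase u := by
      ext w
      simp only [SimpleGraph.mem_neighborFinset, Finset.mem_filter, Finset.mem_erase]
      constructor
      · rintro ⟨hadj, hwA⟩; exact ⟨hadj.ne', hwA⟩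
      · rintro ⟨hne, hwA⟩; exact ⟨hclique u hu w hwA (Ne.symm hne), hwA⟩
    have h2 : (G.neighborFinset u).filter (· ∉ P 0) =
        (Finset.univ.erase (0 : Fin (n + 1))).biUnion (fun i => (P i).filter (G.Adj u)) := by
      ext w
      simp only [SimpleGraph.mem_neighborFinset, Finset.mem_filter, Finset.mem_biUnion,
        Finset.mem_erase, Finset.mem_univ, and_true]
      constructor
      · rintro ⟨hadj, hwA⟩
        obtain ⟨j, hj, _⟩ := hpart w
        refine ⟨j, ?_, hj, hadj⟩
        rintro rfl; exact hwA hj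
      · rintro ⟨j, hj0, hjw, hadj⟩
        exact ⟨hadj, hAe hj0 hjw⟩
    have hc1 : ((P 0).erase u).card = m * n + m := by
      rw [Finset.card_erase_of_mem hu, hcard 0]
      omega
    have hc2 : ((Finset.univ.erase (0 : Fin (n + 1))).biUnion
        (fun i => (P i).filter (G.Adj u))).card = n * m := by
      rw [Finset.card_biUnion]
      · rw [Finset.sum_congr rfl (fun i hi => hdeg0 i (Finset.mem_erase.mp hi).1 u hu)]
        rw [Finset.sum_const, Finset.card_erase_of_mem (Finset.mem_univ _), Finset.card_univ,
          Fintype.card_fin]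
        simp [mul_comm]
      · intro i _ j _ hij
        refine Finset.disjoint_left.mpr ?_
        intro w hwi hwj
        exact hij (hdisj (Finset.mem_filter.mp hwi).1 (Finset.mem_filter.mp hwj).1)
    have hv1 : ∀ w ∈ (G.neighborFinset u).filter (· ∈ P 0), f s(u, w) = 1 := by
      intro w hw
      rw [hfs, if_pos ⟨hu, (Finset.mem_filter.mp hw).2⟩]
    have hv2 : ∀ w ∈ (G.neighborFinset u).filter (· ∉ P 0), f s(u, w) = -1 := by
      intro w hw
      rw [hfs, if_neg (fun h => (Finset.mem_filter.mp hw).2 h.2)]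
    rw [Finset.sum_congr rfl hv1, Finset.sum_congr rfl hv2, Finset.sum_const, Finset.sum_const,
      h1, h2, hc1, hc2]
    push_cast
    ring
  -- every edge has at least one endpoint in P 0, and SEDF condition
  have hSEDF : IsSEDF G f := by
    constructor
    · intro e _
      by_cases h : ∀ x ∈ e, x ∈ P 0
      · left; simp only [hf, if_pos h]
      · right; simp only [hf, if_neg h]
    · intro e he
      induction e using Sym2.ind with
      | _ u v =>
        have hadj : G.Adj u v := (SimpleGraph.mem_edgeSet G).mp ((mem_edgeFin G).mp he)
        rw [closedNbhd_sum G f hadj]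
        obtain ⟨i, hi, _⟩ := hpart u
        obtain ⟨j, hj, _⟩ := hpart v
        by_cases hi0 : i = 0
        · subst hi0
          by_cases hj0 : j = 0
          · subst hj0
            rw [hvsumA u hi, hvsumA v hj, hfs, if_pos ⟨hi, hj⟩]
            have hm : 1 ≤ m := by
              have h2 : 1 < (P 0).card := Finset.one_lt_card.mpr ⟨u, hi, v, hj, hadj.ne⟩
              rw [hcard 0] at h2
              rcases Nat.eq_zero_or_pos m with hm0 | hm0
              · subst hm0; simp at h2
              · exact hm0
            have : (1 : ℤ) ≤ m := by exact_mod_cast hm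
            linarith
          · rw [hvsumA u hi, hvsumO j hj0 v hj, hfs,
              if_neg (fun h => hAe hj0 hj h.2)]
            linarith
        · by_cases hj0 : j = 0
          · rw [hvsumO i hi0 u hi, hvsumA v (hj0 ▸ hj), hfs,
              if_neg (fun h => hAe hi0 hi h.1)]
            linarith
          · exfalso
            by_cases hij : i = j
            · exact hindep i hi0 u hi v (hij ▸ hj) hadj
            · exact hcross i j hi0 hj0 hij u hi v hj hadj
  -- total sum
  set T : ℤ := ∑ e ∈ edgeFin G, f e with hT
  have hT2 : 2 * T = ((m : ℤ) * n + m + 1) * ((m : ℤ) - m * n) := by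
    rw [← handshake]
    have huniv : (Finset.univ : Finset V) = Finset.univ.biUnion P := by
      ext v
      simp only [Finset.mem_univ, Finset.mem_biUnion, true_iff]
      obtain ⟨i, hi, _⟩ := hpart v
      exact ⟨i, trivial, hi⟩
    rw [huniv, Finset.sum_biUnion]
    · rw [Fin.sum_univ_succ]
      have hz : ∑ v ∈ P 0, vsum G f v = (m * n + m + 1 : ℤ) * m := by
        rw [Finset.sum_congr rfl (fun v hv => hvsumA v hv), Finset.sum_const, hcard 0]
        push_cast; ring
      have hs : ∀ i : Fin n, ∑ v ∈ P i.succ, vsum G f v = (m * n + m + 1 : ℤ) * (-m) := by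
        intro i
        have hi0 : (i.succ : Fin (n + 1)) ≠ 0 := Fin.succ_ne_zero i
        rw [Finset.sum_congr rfl (fun v hv => hvsumO i.succ hi0 v hv), Finset.sum_const,
          hcard i.succ]
        push_cast; ring
      rw [hz, Finset.sum_congr rfl (fun i _ => hs i), Finset.sum_const, Finset.card_univ,
        Fintype.card_fin]
      push_cast; ring
    · intro i _ j _ hij
      exact Finset.disjoint_left.mpr (fun w hwi hwj => hij (hdisj hwi hwj))
  have hmem : T ∈ {z : ℤ | ∃ f, IsSEDF G f ∧ z = ∑ e ∈ edgeFin G, f e} := ⟨f, hSEDF, rfl⟩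
  have hbdd : BddBelow {z : ℤ | ∃ f, IsSEDF G f ∧ z = ∑ e ∈ edgeFin G, f e} := by
    refine ⟨-(edgeFin G).card, ?_⟩
    rintro z ⟨g, hg, rfl⟩
    have : ∀ e ∈ edgeFin G, (-1 : ℤ) ≤ g e := by
      intro e he
      rcases hg.1 e he with h | h <;> rw [h] <;> norm_num
    calc (-(edgeFin G).card : ℤ) = ∑ _e ∈ edgeFin G, (-1 : ℤ) := by simp
      _ ≤ ∑ e ∈ edgeFin G, g e := Finset.sum_le_sum this
  have hle : gammaS G ≤ T := csInf_le hbdd hmem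
  have hleQ : (gammaS G : ℚ) ≤ (T : ℚ) := by exact_mod_cast hle
  have hTQ : 2 * (T : ℚ) = ((m : ℚ) * n + m + 1) * ((m : ℚ) - m * n) := by
    exact_mod_cast congrArg (Int.cast : ℤ → ℚ) hT2
  linarith
end

section
/- For any m and n, every L_(m,n)-graph is m-connected. -/
open scoped Classical

theorem stmt5 {V : Type*} [Fintype V] (m n : ℕ) (G : SimpleGraph V)
    (hG : IsLGraph m n G) : MConnected m G := by
  obtain ⟨hcard, P, huniq, hsize, hclique, hindep, hdeg1, hdeg2, hcross⟩ := hG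
  constructor
  · rw [hcard]
    have h1 : m * n + m + 1 ≤ (n + 1) * (m * n + m + 1) :=
      Nat.le_mul_of_pos_left _ (Nat.succ_pos n)
    omega
  · intro S hS
    have hns : ¬ (P 0 ⊆ S) := by
      intro h
      have hc := Finset.card_le_card h
      have h0 := hsize 0
      omega
    obtain ⟨z, hz0, hzS⟩ := Finset.not_subset.mp hns
    have hzmem : z ∈ ((↑S : Set V)ᶜ) := by simpa using hzS
    have step : ∀ (u : V) (hu : u ∈ ((↑S : Set V)ᶜ)), u ∈ P 0 →
        (G.induce ((↑S : Set V)ᶜ)).Reachable ⟨u, hu⟩ ⟨z, hzmem⟩ := by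
      intro u hu hu0
      by_cases huz : u = z
      · subst huz; exact SimpleGraph.Reachable.refl _
      · exact SimpleGraph.Adj.reachable
          (show G.Adj u z from hclique u hu0 z hz0 huz)
    have key : ∀ a : ((↑S : Set V)ᶜ : Set V),
        (G.induce ((↑S : Set V)ᶜ)).Reachable a ⟨z, hzmem⟩ := by
      intro a
      obtain ⟨i, hai, -⟩ := huniq (a : V)
      by_cases hi : i = 0
      · subst hi
        have := step a a.2 hai
        simpa using this
      · have hdeg := hdeg1 i hi (a : V) hai
        have hns2 : ¬ ((P 0).filter (G.Adj (a : V)) ⊆ S) := by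
          intro h
          have hc := Finset.card_le_card h
          omega
        obtain ⟨u, hu, huS⟩ := Finset.not_subset.mp hns2
        rw [Finset.mem_filter] at hu
        have humem : u ∈ ((↑S : Set V)ᶜ) := by simpa using huS
        have h1 : (G.induce ((↑S : Set V)ᶜ)).Reachable a ⟨u, humem⟩ :=
          SimpleGraph.Adj.reachable (show G.Adj (a : V) u from hu.2)
        exact h1.trans (step u humem hu.1)
    haveI : Nonempty (((↑S : Set V)ᶜ : Set V)) := ⟨⟨z, hzmem⟩⟩
    exact SimpleGraph.Connected.mk (fun a b => (key a).trans (key b).symm)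
end

section
/- For any natural numbers m and n, there exists an m-connected graph G with γ'_s(G) ≤ −(m(n−1)/(2(n+1)))·|V(G)|. Consequently, for every m there exists a graph G with γ'_s(G) ≤ ((−m+1)/2)·|V(G)|. -/
open scoped Classical

namespace S7
open Finset SimpleGraph

variable {V : Type*} [Fintype V]

lemma incidence_eq (G : SimpleGraph V) (v : V) :
    (edgeFin G).filter (fun e => v ∈ e) = (G.neighborFinset v).image (fun w => s(v,w)) := by
  ext e
  simp only [edgeFin, Finset.mem_filter, Finset.mem_univ, true_and, Finset.mem_image,
    mem_neighborFinset]
  constructor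
  · rintro ⟨he, hv⟩
    refine ⟨Sym2.Mem.other hv, ?_, Sym2.other_spec hv⟩
    rw [← SimpleGraph.mem_edgeSet, Sym2.other_spec hv]; exact he
  · rintro ⟨w, hadj, rfl⟩
    exact ⟨hadj, Sym2.mem_mk_left v w⟩

lemma vsum_eq_sum_nbrs (G : SimpleGraph V) (f : Sym2 V → ℤ) (v : V) :
    vsum G f v = ∑ w ∈ G.neighborFinset v, f s(v,w) := by
  rw [vsum, incidence_eq]
  exact Finset.sum_image (fun a _ b _ h => Sym2.congr_right.mp h)

lemma closed_sum (G : SimpleGraph V) (f : Sym2 V → ℤ) (a b : V) (hab : G.Adj a b) :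
    ∑ e' ∈ closedNbhd G s(a,b), f e' = vsum G f a + vsum G f b - f s(a,b) := by
  have hne : a ≠ b := hab.ne
  have h1 : closedNbhd G s(a,b)
      = (edgeFin G).filter (fun e => a ∈ e) ∪ (edgeFin G).filter (fun e => b ∈ e) := by
    rw [← Finset.filter_or]
    unfold closedNbhd
    apply Finset.filter_congr
    intro e _
    simp [Sym2.mem_iff]
  have h2 : ((edgeFin G).filter (fun e => a ∈ e)) ∩ ((edgeFin G).filter (fun e => b ∈ e))
      = {s(a,b)} := by
    rw [← Finset.filter_and]
    ext e
    simp only [Finset.mem_filter, Finset.mem_singleton]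
    constructor
    · rintro ⟨_, h⟩; exact (Sym2.mem_and_mem_iff hne).mp h
    · rintro rfl
      refine ⟨?_, Sym2.mem_mk_left a b, Sym2.mem_mk_right a b⟩
      simp [edgeFin, hab]
  have := Finset.sum_union_inter (s₁ := (edgeFin G).filter (fun e => a ∈ e))
    (s₂ := (edgeFin G).filter (fun e => b ∈ e)) (f := f)
  rw [h2, Finset.sum_singleton] at this
  rw [h1]
  unfold vsum
  linarith

lemma handshake (G : SimpleGraph V) (f : Sym2 V → ℤ) :
    ∑ v, vsum G f v = 2 * ∑ e ∈ edgeFin G, f e := by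
  unfold vsum
  have : ∀ v : V, ∑ e ∈ (edgeFin G).filter (fun e => v ∈ e), f e
      = ∑ e ∈ edgeFin G, if v ∈ e then f e else 0 := fun v => Finset.sum_filter _ _
  simp_rw [this]
  rw [Finset.sum_comm]
  rw [Finset.mul_sum]
  apply Finset.sum_congr rfl
  intro e he
  simp only [edgeFin, Finset.mem_filter] at he
  obtain ⟨a, b, rfl⟩ : ∃ a b, e = s(a,b) := ⟨e.out.1, e.out.2, by exact (Quot.out_eq e).symm⟩
  have hab : G.Adj a b := he.2
  have : (∑ v : V, if v ∈ s(a,b) then f s(a,b) else 0)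
      = ∑ v ∈ Finset.univ.filter (fun v => v ∈ s(a,b)), f s(a,b) :=
    (Finset.sum_filter _ _).symm
  rw [this]
  have hset : Finset.univ.filter (fun v => v ∈ s(a,b)) = {a, b} := by
    ext v; simp [Sym2.mem_iff]
  rw [hset, Finset.sum_pair hab.ne]
  ring

lemma gammaS_le (G : SimpleGraph V) (f : Sym2 V → ℤ) (h : IsSEDF G f) :
    gammaS G ≤ ∑ e ∈ edgeFin G, f e := by
  apply csInf_le
  · refine ⟨-(edgeFin G).card, ?_⟩
    rintro z ⟨g, hg, rfl⟩
    have : ∀ e ∈ edgeFin G, (-1 : ℤ) ≤ g e := by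
      intro e he; rcases hg.1 e he with h1 | h1 <;> omega
    calc (-(edgeFin G).card : ℤ) = ∑ _e ∈ edgeFin G, (-1 : ℤ) := by
          simp [Finset.sum_const]
      _ ≤ ∑ e ∈ edgeFin G, g e := Finset.sum_le_sum this
  · exact ⟨f, h, rfl⟩


open Finset

def sel (m C u t : Nat) : Prop := ∃ s, s < m ∧ (t + s) % C = u

lemma sel_mod (m C u t : Nat) : sel m C u (t % C) ↔ sel m C u t := by
  unfold sel
  constructor <;> rintro ⟨s, hs, h⟩ <;> exact ⟨s, hs, by rw [← h, Nat.mod_add_mod]⟩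

lemma M1 (m C : Nat) (hC : 0 < C) (hm : m ≤ C) (t : Nat) :
    ((range C).filter (fun u => sel m C u t)).card = m := by
  have himg : (range C).filter (fun u => sel m C u t)
      = (range m).image (fun s => (t + s) % C) := by
    ext u
    simp only [mem_filter, mem_range, mem_image]
    constructor
    · rintro ⟨_, s, hs, h⟩; exact ⟨s, hs, h⟩
    · rintro ⟨s, hs, rfl⟩; exact ⟨Nat.mod_lt _ hC, s, hs, rfl⟩
  rw [himg, Finset.card_image_of_injOn, Finset.card_range]
  intro s hs s' hs' h
  simp only [Finset.coe_range, Set.mem_Iio] at hs hs'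
  have hmod : s ≡ s' [MOD C] := Nat.ModEq.add_left_cancel' t h
  exact hmod.eq_of_lt_of_lt (lt_of_lt_of_le hs hm) (lt_of_lt_of_le hs' hm)

lemma M2 (m C u : Nat) (hC : 0 < C) (hm : m ≤ C) (hu : u < C) :
    ((range C).filter (fun r => sel m C u r)).card = m := by
  have key : ∀ s, s < m → ((u + (C - s)) % C + s) % C = u := by
    intro s hs
    rw [Nat.mod_add_mod]
    have h1 : u + (C - s) + s = u + C := by omega
    rw [h1, Nat.add_mod_right, Nat.mod_eq_of_lt hu]
  have himg : (range C).filter (fun r => sel m C u r)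
      = (range m).image (fun s => (u + (C - s)) % C) := by
    ext r
    simp only [mem_filter, mem_range, mem_image]
    constructor
    · rintro ⟨hr, s, hs, hsu⟩
      refine ⟨s, hs, ?_⟩
      have h1 : (u + (C - s)) % C = ((r + s) % C + (C - s)) % C := by rw [hsu]
      rw [Nat.mod_add_mod] at h1
      have h2 : r + s + (C - s) = r + C := by omega
      rw [h2, Nat.add_mod_right, Nat.mod_eq_of_lt hr] at h1
      exact h1
    · rintro ⟨s, hs, rfl⟩
      exact ⟨Nat.mod_lt _ hC, s, hs, key s hs⟩
  rw [himg, Finset.card_image_of_injOn, Finset.card_range]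
  intro s hs s' hs' h
  dsimp only at h
  simp only [Finset.coe_range, Set.mem_Iio] at hs hs'
  have h1 := key s hs
  have h2 := key s' hs'
  rw [h] at h1
  have h3 : (u + (C - s')) % C + s ≡ (u + (C - s')) % C + s' [MOD C] := h1.trans h2.symm
  have hmod : s ≡ s' [MOD C] := Nat.ModEq.add_left_cancel' _ h3
  exact hmod.eq_of_lt_of_lt (lt_of_lt_of_le hs hm) (lt_of_lt_of_le hs' hm)

lemma card_filter_range_add (a b : Nat) (P : Nat → Prop) [DecidablePred P] :
    ((range (a+b)).filter P).card
      = ((range a).filter P).card + ((range b).filter (fun r => P (a + r))).card := by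
  rw [Finset.range_add, Finset.filter_union, Finset.card_union_of_disjoint]
  · congr 1
    rw [Finset.filter_map, Finset.card_map]
    rfl
  · apply Finset.disjoint_filter_filter
    simp only [Finset.disjoint_left, Finset.mem_range, Finset.mem_map, addLeftEmbedding_apply]
    rintro x hx ⟨y, _, rfl⟩
    omega

lemma M3 (m C u : Nat) (hC : 0 < C) (hm : m ≤ C) (hu : u < C) (nn : Nat) :
    ((range (nn * C)).filter (fun t => sel m C u t)).card = nn * m := by
  induction nn with
  | zero => simp
  | succ k ih =>
    have h1 : (k + 1) * C = k * C + C := by ring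
    rw [h1, card_filter_range_add, ih]
    have h2 : (range C).filter (fun r => sel m C u (k * C + r))
        = (range C).filter (fun r => sel m C u r) := by
      apply Finset.filter_congr
      intro r _
      have hmod : (k * C + r) % C = r % C := by
        rw [Nat.add_comm, Nat.add_mul_mod_self_right]
      rw [← sel_mod m C u (k * C + r), hmod, sel_mod]
    rw [h2, M2 m C u hC hm hu]
    ring


open Finset SimpleGraph

section Construction
variable (m n : ℕ)

def C : ℕ := m * n + m + 1
def K : ℕ := (n + 1) * C m n

lemma C_pos : 0 < C m n := by unfold C; omega
lemma m_le_C : m ≤ C m n := by unfold C; omega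
lemma K_eq : K m n = C m n + n * C m n := by unfold K; ring
lemma C_le_K : C m n ≤ K m n := by rw [K_eq]; omega

def LG : SimpleGraph (Fin (K m n)) :=
  SimpleGraph.fromRel (fun i j =>
    ((i : ℕ) < C m n ∧ (j : ℕ) < C m n) ∨
    ((i : ℕ) < C m n ∧ C m n ≤ (j : ℕ) ∧ sel m (C m n) i ((j : ℕ) - C m n)))

lemma adj_iff (i j : Fin (K m n)) : (LG m n).Adj i j ↔ i ≠ j ∧
    (((i : ℕ) < C m n ∧ (j : ℕ) < C m n) ∨
     ((i : ℕ) < C m n ∧ C m n ≤ (j : ℕ) ∧ sel m (C m n) i ((j : ℕ) - C m n)) ∨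
     ((j : ℕ) < C m n ∧ C m n ≤ (i : ℕ) ∧ sel m (C m n) j ((i : ℕ) - C m n))) := by
  rw [LG, SimpleGraph.fromRel_adj]
  tauto

lemma card_univ_filter {k : ℕ} (Q : Fin k → Prop) (P : ℕ → Prop)
    [DecidablePred Q] [DecidablePred P]
    (h : ∀ j : Fin k, Q j ↔ P j.val) :
    ((Finset.univ : Finset (Fin k)).filter Q).card = ((range k).filter P).card := by
  rw [Finset.card_filter, Finset.card_filter,
    ← Fin.sum_univ_eq_sum_range (fun x => if P x then 1 else 0) k]
  exact Finset.sum_congr rfl (fun j _ => by simp [h j])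

noncomputable def ff : Sym2 (Fin (K m n)) → ℤ :=
  fun e => if ∀ x ∈ e, (x : ℕ) < C m n then 1 else -1

lemma ff_mk (a b : Fin (K m n)) :
    ff m n s(a,b) = if (a : ℕ) < C m n ∧ (b : ℕ) < C m n then 1 else -1 := by
  have h : (∀ x ∈ s(a,b), (x : ℕ) < C m n) ↔ ((a : ℕ) < C m n ∧ (b : ℕ) < C m n) := by
    constructor
    · intro h; exact ⟨h a (Sym2.mem_mk_left a b), h b (Sym2.mem_mk_right a b)⟩
    · rintro ⟨h1, h2⟩ x hx
      rcases Sym2.mem_iff.mp hx with rfl | rfl <;> assumption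
  unfold ff
  simp only [h]

lemma ff_pm (e : Sym2 (Fin (K m n))) : ff m n e = 1 ∨ ff m n e = -1 := by
  unfold ff; split <;> simp

-- neighbors of a clique vertex
lemma nbrs_clique_lt (v : Fin (K m n)) (hv : (v : ℕ) < C m n) :
    ((Finset.univ : Finset (Fin (K m n))).filter
        (fun w => (LG m n).Adj v w ∧ (w : ℕ) < C m n)).card = C m n - 1 := by
  have hpt : ∀ w : Fin (K m n),
      ((LG m n).Adj v w ∧ (w : ℕ) < C m n) ↔ ((w : ℕ) < C m n ∧ (w : ℕ) ≠ (v : ℕ)) := by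
    intro w
    rw [adj_iff]
    constructor
    · rintro ⟨⟨hne, -⟩, hw⟩
      exact ⟨hw, fun h => hne (Fin.ext h).symm⟩
    · rintro ⟨hw, hne⟩
      exact ⟨⟨fun h => hne (by rw [h]), Or.inl ⟨hv, hw⟩⟩, hw⟩
  rw [Finset.filter_congr (fun w _ => hpt w)]
  refine Eq.trans
    (card_univ_filter _ (fun x => x < C m n ∧ x ≠ (v : ℕ)) (fun j => Iff.rfl)) ?_
  have hset : (range (K m n)).filter (fun x => x < C m n ∧ x ≠ (v : ℕ))
      = (range (C m n)).erase (v : ℕ) := by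
    ext x
    simp only [mem_filter, mem_range, mem_erase]
    have := C_le_K m n
    constructor
    · rintro ⟨-, h1, h2⟩; exact ⟨h2, h1⟩
    · rintro ⟨h2, h1⟩; exact ⟨by omega, h1, h2⟩
  rw [hset, Finset.card_erase_of_mem (by simpa using hv), Finset.card_range]

lemma nbrs_clique_ge (v : Fin (K m n)) (hv : (v : ℕ) < C m n) :
    ((Finset.univ : Finset (Fin (K m n))).filter
        (fun w => (LG m n).Adj v w ∧ ¬ (w : ℕ) < C m n)).card = n * m := by
  have hpt : ∀ w : Fin (K m n),
      ((LG m n).Adj v w ∧ ¬ (w : ℕ) < C m n)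
        ↔ (C m n ≤ (w : ℕ) ∧ sel m (C m n) (v : ℕ) ((w : ℕ) - C m n)) := by
    intro w
    rw [adj_iff]
    constructor
    · rintro ⟨⟨hne, hc⟩, hw⟩
      rcases hc with ⟨-, h⟩ | ⟨-, h1, h2⟩ | ⟨h1, -, -⟩
      · omega
      · exact ⟨h1, h2⟩
      · omega
    · rintro ⟨h1, h2⟩
      refine ⟨⟨fun h => ?_, Or.inr (Or.inl ⟨hv, h1, h2⟩)⟩, by omega⟩
      rw [h] at hv; omega
  rw [Finset.filter_congr (fun w _ => hpt w)]
  refine Eq.trans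
    (card_univ_filter _ (fun x => C m n ≤ x ∧ sel m (C m n) (v : ℕ) (x - C m n))
      (fun j => Iff.rfl)) ?_
  rw [show range (K m n) = range (C m n + n * C m n) from by rw [K_eq], card_filter_range_add]
  have h1 : ((range (C m n)).filter
      (fun x => C m n ≤ x ∧ sel m (C m n) (v : ℕ) (x - C m n))).card = 0 := by
    rw [Finset.card_eq_zero, Finset.filter_eq_empty_iff]
    intro x hx
    rw [mem_range] at hx
    rintro ⟨h1, -⟩
    omega
  rw [h1]
  have h2 : (range (n * C m n)).filter
        (fun r => C m n ≤ C m n + r ∧ sel m (C m n) (v : ℕ) (C m n + r - C m n))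
      = (range (n * C m n)).filter (fun r => sel m (C m n) (v : ℕ) r) := by
    apply Finset.filter_congr
    intro r _
    have : C m n + r - C m n = r := by omega
    rw [this]
    simp
  rw [h2, M3 m (C m n) (v : ℕ) (C_pos m n) (m_le_C m n) hv n]
  omega

lemma nbrs_outer (w : Fin (K m n)) (hw : C m n ≤ (w : ℕ)) :
    (Finset.univ : Finset (Fin (K m n))).filter (fun u => (LG m n).Adj w u)
      = (Finset.univ : Finset (Fin (K m n))).filter
          (fun (u : Fin (K m n)) =>
            (u : ℕ) < C m n ∧ sel m (C m n) (u : ℕ) ((w : ℕ) - C m n)) := by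
  apply Finset.filter_congr
  intro u _
  rw [adj_iff]
  constructor
  · rintro ⟨hne, hc⟩
    rcases hc with ⟨h, -⟩ | ⟨h, -, -⟩ | ⟨h1, -, h2⟩
    · omega
    · omega
    · exact ⟨h1, h2⟩
  · rintro ⟨h1, h2⟩
    refine ⟨fun h => ?_, Or.inr (Or.inr ⟨h1, hw, h2⟩)⟩
    rw [← h] at h1; omega

lemma card_nbrs_outer (w : Fin (K m n)) (hw : C m n ≤ (w : ℕ)) :
    ((Finset.univ : Finset (Fin (K m n))).filter (fun u => (LG m n).Adj w u)).card = m := by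
  rw [nbrs_outer m n w hw]
  refine Eq.trans
    (card_univ_filter _ (fun x => x < C m n ∧ sel m (C m n) x ((w : ℕ) - C m n))
      (fun j => Iff.rfl)) ?_
  have hset : (range (K m n)).filter
        (fun x => x < C m n ∧ sel m (C m n) x ((w : ℕ) - C m n))
      = (range (C m n)).filter (fun x => sel m (C m n) x ((w : ℕ) - C m n)) := by
    ext x
    simp only [mem_filter, mem_range]
    have := C_le_K m n
    constructor
    · rintro ⟨-, h1, h2⟩; exact ⟨h1, h2⟩
    · rintro ⟨h1, h2⟩; exact ⟨by omega, h1, h2⟩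
  rw [hset, M1 m (C m n) (C_pos m n) (m_le_C m n) _]

lemma vsum_clique (v : Fin (K m n)) (hv : (v : ℕ) < C m n) :
    vsum (LG m n) (ff m n) v = m := by
  rw [vsum_eq_sum_nbrs]
  have hcongr : ∀ w ∈ (LG m n).neighborFinset v,
      ff m n s(v,w) = if (w : ℕ) < C m n then 1 else -1 := by
    intro w _
    rw [ff_mk]
    simp [hv]
  rw [Finset.sum_congr rfl hcongr, Finset.sum_ite, Finset.sum_const, Finset.sum_const]
  have e1 : ((LG m n).neighborFinset v).filter (fun (w : Fin (K m n)) => (w : ℕ) < C m n)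
      = (Finset.univ : Finset (Fin (K m n))).filter
          (fun w => (LG m n).Adj v w ∧ (w : ℕ) < C m n) := by
    rw [neighborFinset_eq_filter, Finset.filter_filter]
  have e2 : ((LG m n).neighborFinset v).filter
      (fun (w : Fin (K m n)) => ¬ (w : ℕ) < C m n)
      = (Finset.univ : Finset (Fin (K m n))).filter
          (fun w => (LG m n).Adj v w ∧ ¬ (w : ℕ) < C m n) := by
    rw [neighborFinset_eq_filter, Finset.filter_filter]
  rw [e1, e2, nbrs_clique_lt m n v hv, nbrs_clique_ge m n v hv]
  have hC : (1 : ℕ) ≤ C m n := C_pos m n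
  simp only [nsmul_eq_mul, mul_one, mul_neg_one]
  rw [Nat.cast_sub hC]
  have hCval : ((C m n : ℕ) : ℤ) = (m : ℤ) * n + m + 1 := by
    show ((m * n + m + 1 : ℕ) : ℤ) = _
    push_cast
    ring
  rw [hCval]
  push_cast
  ring

lemma vsum_outer (w : Fin (K m n)) (hw : C m n ≤ (w : ℕ)) :
    vsum (LG m n) (ff m n) w = -m := by
  rw [vsum_eq_sum_nbrs]
  have hcongr : ∀ u ∈ (LG m n).neighborFinset w, ff m n s(w,u) = -1 := by
    intro u _
    rw [ff_mk]
    have : ¬ ((w : ℕ) < C m n ∧ (u : ℕ) < C m n) := by rintro ⟨h, -⟩; omega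
    rw [if_neg this]
  rw [Finset.sum_congr rfl hcongr, Finset.sum_const]
  have : (LG m n).neighborFinset w
      = (Finset.univ : Finset (Fin (K m n))).filter (fun u => (LG m n).Adj w u) := by
    rw [neighborFinset_eq_filter]
  rw [this, card_nbrs_outer m n w hw]
  simp

lemma lg_sedf : IsSEDF (LG m n) (ff m n) := by
  constructor
  · intro e _; exact ff_pm m n e
  · intro e he
    obtain ⟨a, b, rfl⟩ : ∃ a b, e = s(a,b) :=
      ⟨e.out.1, e.out.2, by exact (Quot.out_eq e).symm⟩
    simp only [edgeFin, Finset.mem_filter, Finset.mem_univ, true_and,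
      SimpleGraph.mem_edgeSet] at he
    rw [closed_sum (LG m n) (ff m n) a b he]
    have hcase := (adj_iff m n a b).mp he
    obtain ⟨hne, hc⟩ := hcase
    by_cases ha : (a : ℕ) < C m n <;> by_cases hb : (b : ℕ) < C m n
    · -- clique edge
      have hm : 1 ≤ m := by
        by_contra hm0
        have : m = 0 := by omega
        subst this
        have hC1 : C 0 n = 1 := by unfold C; ring
        apply hne
        apply Fin.ext
        omega
      rw [vsum_clique m n a ha, vsum_clique m n b hb, ff_mk, if_pos ⟨ha, hb⟩]
      have : (1 : ℤ) ≤ (m : ℤ) := by exact_mod_cast hm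
      linarith
    · rw [vsum_clique m n a ha, vsum_outer m n b (by omega), ff_mk,
        if_neg (by rintro ⟨-, h⟩; omega)]
      ring_nf
      omega
    · rw [vsum_outer m n a (by omega), vsum_clique m n b hb, ff_mk,
        if_neg (by rintro ⟨h, -⟩; omega)]
      ring_nf
      omega
    · exfalso
      rcases hc with ⟨h, -⟩ | ⟨h, -, -⟩ | ⟨h, -, -⟩ <;> omega

lemma lg_total :
    2 * (∑ e ∈ edgeFin (LG m n), ff m n e)
      = (C m n : ℤ) * m - (n : ℤ) * (C m n : ℤ) * m := by
  rw [← handshake (LG m n) (ff m n)]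
  have hval : ∀ v : Fin (K m n),
      vsum (LG m n) (ff m n) v = if (v : ℕ) < C m n then (m : ℤ) else -m := by
    intro v
    by_cases hv : (v : ℕ) < C m n
    · rw [if_pos hv, vsum_clique m n v hv]
    · rw [if_neg hv, vsum_outer m n v (by omega)]
  rw [Finset.sum_congr rfl (fun v _ => hval v)]
  rw [Fin.sum_univ_eq_sum_range (fun x => if x < C m n then (m : ℤ) else -m) (K m n)]
  rw [K_eq, Finset.range_add, Finset.sum_union]
  · have s1 : ∑ x ∈ range (C m n), (if x < C m n then (m : ℤ) else -m)
        = (C m n : ℤ) * m := by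
      rw [Finset.sum_congr rfl (fun x hx => if_pos (Finset.mem_range.mp hx)),
        Finset.sum_const, Finset.card_range, nsmul_eq_mul]
    have s2 : ∑ x ∈ (range (n * C m n)).map (addLeftEmbedding (C m n)),
        (if x < C m n then (m : ℤ) else -m) = -((n : ℤ) * (C m n : ℤ) * m) := by
      rw [Finset.sum_map]
      have : ∀ r ∈ range (n * C m n),
          (if (addLeftEmbedding (C m n)) r < C m n then (m : ℤ) else -m) = -m := by
        intro r _
        rw [if_neg]
        simp only [addLeftEmbedding_apply]
        omega
      rw [Finset.sum_congr rfl this, Finset.sum_const, Finset.card_range, nsmul_eq_mul]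
      push_cast
      ring
    rw [s1, s2]
    ring
  · simp only [Finset.disjoint_left, Finset.mem_range, Finset.mem_map, addLeftEmbedding_apply]
    rintro x hx ⟨y, -, rfl⟩
    omega

lemma lg_mconnected : MConnected m (LG m n) := by
  constructor
  · rw [Fintype.card_fin]
    calc m < m * n + m + 1 := by omega
      _ = C m n := rfl
      _ ≤ K m n := C_le_K m n
  · intro S hS
    -- find a clique vertex not in S
    have hmC := m_le_C m n
    have hCK := C_le_K m n
    have hu0 : ∃ u0 : Fin (K m n), (u0 : ℕ) < C m n ∧ u0 ∉ S := by
      by_contra h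
      push_neg at h
      have hsub : (Finset.univ : Finset (Fin (K m n))).filter
          (fun (v : Fin (K m n)) => (v : ℕ) < C m n) ⊆ S := by
        intro v hv
        rw [Finset.mem_filter] at hv
        exact h v hv.2
      have hcard : ((Finset.univ : Finset (Fin (K m n))).filter
          (fun (v : Fin (K m n)) => (v : ℕ) < C m n)).card = C m n := by
        refine Eq.trans (card_univ_filter _ (fun x => x < C m n) (fun j => Iff.rfl)) ?_
        have : (range (K m n)).filter (fun x => x < C m n) = range (C m n) := by
          ext x
          simp only [mem_filter, mem_range]
          omega
        rw [this, Finset.card_range]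
      have := Finset.card_le_card hsub
      omega
    obtain ⟨u0, hu0C, hu0S⟩ := hu0
    have hmem : u0 ∈ ((↑S : Set (Fin (K m n)))ᶜ) := by
      simp [hu0S]
    rw [SimpleGraph.connected_iff]
    refine ⟨?_, ⟨⟨u0, hmem⟩⟩⟩
    have key : ∀ z : ((↑S : Set (Fin (K m n)))ᶜ : Set (Fin (K m n))),
        ((LG m n).induce ((↑S : Set (Fin (K m n)))ᶜ)).Reachable z ⟨u0, hmem⟩ := by
      rintro ⟨v, hv⟩
      have hclique_step : ∀ (u : Fin (K m n)) (hu : u ∈ ((↑S : Set (Fin (K m n)))ᶜ)),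
          (u : ℕ) < C m n →
          ((LG m n).induce ((↑S : Set (Fin (K m n)))ᶜ)).Reachable ⟨u, hu⟩ ⟨u0, hmem⟩ := by
        intro u hu huC
        by_cases heq : u = u0
        · subst heq; exact SimpleGraph.Reachable.refl _
        · apply SimpleGraph.Adj.reachable
          show (LG m n).Adj u u0
          rw [adj_iff]
          exact ⟨heq, Or.inl ⟨huC, hu0C⟩⟩
      by_cases hvc : (v : ℕ) < C m n
      · exact hclique_step v hv hvc
      · have hvo : C m n ≤ (v : ℕ) := by omega
        -- find a neighbor of v outside S
        have hex : ∃ u : Fin (K m n), (LG m n).Adj v u ∧ u ∉ S := by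
          by_contra h
          push_neg at h
          have hsub : (Finset.univ : Finset (Fin (K m n))).filter
              (fun u => (LG m n).Adj v u) ⊆ S := by
            intro u hu
            rw [Finset.mem_filter] at hu
            exact h u hu.2
          have := Finset.card_le_card hsub
          rw [card_nbrs_outer m n v hvo] at this
          omega
        obtain ⟨u, hadj, huS⟩ := hex
        have huC : (u : ℕ) < C m n := by
          have := ((adj_iff m n v u).mp hadj).2
          rcases this with ⟨h, -⟩ | ⟨h, -, -⟩ | ⟨h, -, -⟩ <;> omega
        have huc : u ∈ ((↑S : Set (Fin (K m n)))ᶜ) := by simp [huS]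
        have step1 : ((LG m n).induce ((↑S : Set (Fin (K m n)))ᶜ)).Adj ⟨v, hv⟩ ⟨u, huc⟩ := by
          show (LG m n).Adj v u
          exact hadj
        exact (SimpleGraph.Adj.reachable step1).trans (hclique_step u huc huC)
    intro x y
    exact (key x).trans (key y).symm

end Construction

lemma main1 (m n : ℕ) : ∃ (k : ℕ) (G : SimpleGraph (Fin k)), MConnected m G ∧
    (gammaS G : ℚ) ≤ -((m : ℚ) * ((n : ℚ) - 1) / (2 * ((n : ℚ) + 1))) * k := by
  refine ⟨K m n, LG m n, lg_mconnected m n, ?_⟩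
  set z : ℤ := ∑ e ∈ edgeFin (LG m n), ff m n e with hz
  have hle : gammaS (LG m n) ≤ z := gammaS_le (LG m n) (ff m n) (lg_sedf m n)
  have htot := lg_total m n
  rw [← hz] at htot
  have hCval : ((C m n : ℕ) : ℚ) = (m : ℚ) * (n : ℚ) + (m : ℚ) + 1 := by
    show ((m * n + m + 1 : ℕ) : ℚ) = _
    push_cast
    ring
  have hKval : ((K m n : ℕ) : ℚ) = ((n : ℚ) + 1) * ((m : ℚ) * (n : ℚ) + (m : ℚ) + 1) := by
    show (((n + 1) * C m n : ℕ) : ℚ) = _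
    push_cast
    rw [hCval]
  have h2 : 2 * (z : ℚ) = ((m : ℚ) * (n : ℚ) + (m : ℚ) + 1) * (m : ℚ)
      - (n : ℚ) * ((m : ℚ) * (n : ℚ) + (m : ℚ) + 1) * (m : ℚ) := by
    have hq := congrArg (fun t : ℤ => (t : ℚ)) htot
    push_cast at hq
    rw [hCval] at hq
    linarith [hq]
  have hn1 : (n : ℚ) + 1 ≠ 0 := by positivity
  have hzq : (z : ℚ) = -((m : ℚ) * ((n : ℚ) - 1) / (2 * ((n : ℚ) + 1))) * ((K m n : ℕ) : ℚ) := by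
    rw [hKval]
    have hr : -((m : ℚ) * ((n : ℚ) - 1) / (2 * ((n : ℚ) + 1)))
        * (((n : ℚ) + 1) * ((m : ℚ) * (n : ℚ) + (m : ℚ) + 1))
        = -((m : ℚ) * ((n : ℚ) - 1) * ((m : ℚ) * (n : ℚ) + (m : ℚ) + 1)) / 2 := by
      rw [neg_mul, neg_div, neg_inj, div_mul_eq_mul_div,
        div_eq_div_iff (by positivity) (by norm_num)]
      ring
    rw [hr]
    linear_combination h2 / 2
  calc (gammaS (LG m n) : ℚ) ≤ (z : ℚ) := by exact_mod_cast hle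
    _ = _ := hzq

theorem main2 (m : ℕ) : ∃ (k : ℕ) (G : SimpleGraph (Fin k)),
    (gammaS G : ℚ) ≤ ((-(m : ℚ) + 1) / 2) * k := by
  obtain ⟨k, G, -, h⟩ := main1 m (2 * m + 1)
  refine ⟨k, G, le_trans h ?_⟩
  apply mul_le_mul_of_nonneg_right _ (by positivity)
  have hx : (0 : ℚ) ≤ (m : ℚ) := by positivity
  push_cast
  rw [show -((m : ℚ) * (2 * (m : ℚ) + 1 - 1) / (2 * (2 * (m : ℚ) + 1 + 1)))
      = (-((m : ℚ) * (2 * (m : ℚ)))) / (2 * (2 * (m : ℚ) + 2)) from by ring]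
  rw [div_le_div_iff₀ (by positivity) (by norm_num : (0 : ℚ) < 2)]
  nlinarith [hx]

end S7



theorem stmt7 :
    (∀ m n : ℕ, ∃ (k : ℕ) (G : SimpleGraph (Fin k)), MConnected m G ∧
      (gammaS G : ℚ) ≤ -((m : ℚ) * ((n : ℚ) - 1) / (2 * ((n : ℚ) + 1))) * k) ∧
    (∀ m : ℕ, ∃ (k : ℕ) (G : SimpleGraph (Fin k)),
      (gammaS G : ℚ) ≤ ((-(m : ℚ) + 1) / 2) * k) := by
  exact ⟨S7.main1, S7.main2⟩
end

section
/- Let G be a graph of order n, let H be an elementary subgraph of G (each component of H is an edge or a cycle) of maximum number of vertices in which every cycle is odd, and let v be a vertex of G not covered by H. Then the degree of v in G is at most (n − α)/2, where α is the number of vertices of G not covered by H. -/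
open scoped Classical

section Stmt9Aux

variable {V : Type*} [Fintype V]

lemma stmt9_deg_pos {H : SimpleGraph V} {u : V} (h : u ∈ H.support) :
    0 < (H.neighborSet u).ncard := by
  rw [Set.ncard_pos (Set.toFinite _)]
  obtain ⟨w, hw⟩ := h
  exact ⟨w, hw⟩

lemma stmt9_adj_deg_two {H : SimpleGraph V} (hel : IsElementary H) {u w : V}
    (h : H.Adj u w) (hu : (H.neighborSet u).ncard = 2) :
    (H.neighborSet w).ncard = 2 := by
  have h1 : (H.neighborSet w).ncard ≤ 2 := hel.1 w
  have h2 : 0 < (H.neighborSet w).ncard := stmt9_deg_pos ⟨u, h.symm⟩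
  have h3 : (H.neighborSet w).ncard ≠ 1 := fun hone => by
    have := hel.2 w hone u h.symm
    omega
  omega

set_option linter.unusedSectionVars false in
lemma stmt9_uniq {H : SimpleGraph V} {u : V} (h1 : (H.neighborSet u).ncard = 1)
    {x y : V} (hx : H.Adj u x) (hy : H.Adj u y) : x = y := by
  obtain ⟨a, ha⟩ := Set.ncard_eq_one.1 h1
  have hx' : x ∈ H.neighborSet u := hx
  have hy' : y ∈ H.neighborSet u := hy
  rw [ha, Set.mem_singleton_iff] at hx' hy'
  rw [hx', hy']

end Stmt9Aux

set_option maxHeartbeats 2000000 in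
theorem stmt9 {V : Type*} [Fintype V] (G H : SimpleGraph V) (hHG : H ≤ G)
    (hel : IsElementary H)
    (hodd : ∀ v : V, (H.neighborSet v).ncard = 2 →
      Odd ((H.connectedComponentMk v).supp.ncard))
    (hmax : ∀ H' : SimpleGraph V, H' ≤ G → IsElementary H' →
      H'.support.ncard ≤ H.support.ncard)
    (v : V) (hv : v ∉ H.support) :
    2 * (G.neighborSet v).ncard ≤ Fintype.card V - (Fintype.card V - H.support.ncard) := by
  classical
  have hvadj : ∀ w, ¬ H.Adj v w := fun w ha => hv ⟨w, ha⟩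
  -- generic "improvement contradicts maximality" step
  have improve : ∀ H' : SimpleGraph V, H' ≤ G → IsElementary H' →
      H.support ⊆ H'.support → v ∈ H'.support → False := by
    intro H' hle he hsub hvS
    have hne : H.support ≠ H'.support := fun h => hv (h ▸ hvS)
    have h1 := Set.ncard_lt_ncard (hsub.ssubset_of_ne hne) (Set.toFinite _)
    have h2 := hmax H' hle he
    omega
  -- E1 : every G-neighbor of v is covered by H
  have E1 : ∀ u, G.Adj v u → u ∈ H.support := by
    intro u hGu
    by_contra hu
    have huadj : ∀ w, ¬ H.Adj u w := fun w ha => hu ⟨w, ha⟩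
    have hvu : v ≠ u := G.ne_of_adj hGu
    set H1 := H ⊔ SimpleGraph.fromEdgeSet {s(v,u)} with hH1
    have hadj : ∀ a b, H1.Adj a b ↔ H.Adj a b ∨ ((a = v ∧ b = u) ∨ (a = u ∧ b = v)) := by
      intro a b
      simp only [hH1, SimpleGraph.sup_adj, SimpleGraph.fromEdgeSet_adj,
        Set.mem_singleton_iff, Sym2.eq_iff]
      constructor
      · rintro (h | ⟨(⟨rfl,rfl⟩|⟨rfl,rfl⟩), hne⟩)
        · exact Or.inl h
        · exact Or.inr (Or.inl ⟨rfl, rfl⟩)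
        · exact Or.inr (Or.inr ⟨rfl, rfl⟩)
      · rintro (h | ⟨rfl, rfl⟩ | ⟨rfl, rfl⟩)
        · exact Or.inl h
        · exact Or.inr ⟨Or.inl ⟨rfl, rfl⟩, hvu⟩
        · exact Or.inr ⟨Or.inr ⟨rfl, rfl⟩, hvu.symm⟩
    have hnbv : H1.neighborSet v = {u} := by
      ext x
      simp only [SimpleGraph.mem_neighborSet, hadj, Set.mem_singleton_iff]
      constructor
      · rintro (h | ⟨_, rfl⟩ | ⟨h, _⟩)
        · exact absurd h (hvadj x)
        · rfl
        · exact absurd h hvu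
      · rintro rfl
        tauto
    have hnbu : H1.neighborSet u = {v} := by
      ext x
      simp only [SimpleGraph.mem_neighborSet, hadj, Set.mem_singleton_iff]
      constructor
      · rintro (h | ⟨h, _⟩ | ⟨_, rfl⟩)
        · exact absurd h (huadj x)
        · exact absurd h.symm hvu
        · rfl
      · rintro rfl
        tauto
    have hnbo : ∀ w, w ≠ v → w ≠ u → H1.neighborSet w = H.neighborSet w := by
      intro w hwv hwu
      ext x
      simp only [SimpleGraph.mem_neighborSet, hadj]
      constructor
      · rintro (h | ⟨rfl, _⟩ | ⟨rfl, _⟩)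
        · exact h
        · exact absurd rfl hwv
        · exact absurd rfl hwu
      · exact fun h => Or.inl h
    have helem : IsElementary H1 := by
      constructor
      · intro w
        by_cases hwv : w = v
        · subst hwv; rw [hnbv]; simp
        by_cases hwu : w = u
        · subst hwu; rw [hnbu]; simp
        rw [hnbo w hwv hwu]; exact hel.1 w
      · intro w hw1 x hx
        by_cases hwv : w = v
        · rw [hwv] at hx
          have hxm : x ∈ H1.neighborSet v := hx
          rw [hnbv, Set.mem_singleton_iff] at hxm
          rw [hxm, hnbu]; simp
        by_cases hwu : w = u
        · rw [hwu] at hx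
          have hxm : x ∈ H1.neighborSet u := hx
          rw [hnbu, Set.mem_singleton_iff] at hxm
          rw [hxm, hnbv]; simp
        rw [hnbo w hwv hwu] at hw1
        have hx' : H.Adj w x := by
          rcases (hadj w x).1 hx with h | ⟨rfl, _⟩ | ⟨rfl, _⟩
          · exact h
          · exact absurd rfl hwv
          · exact absurd rfl hwu
        have hdx : (H.neighborSet x).ncard = 1 := hel.2 w hw1 x hx'
        have hxv : x ≠ v := fun h => hv ⟨w, (h ▸ hx' : H.Adj w v).symm⟩
        have hxu : x ≠ u := fun h => hu ⟨w, (h ▸ hx' : H.Adj w u).symm⟩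
        rw [hnbo x hxv hxu]; exact hdx
    have hle : H1 ≤ G := by
      intro a b hab
      rcases (hadj a b).1 hab with h | ⟨rfl, rfl⟩ | ⟨rfl, rfl⟩
      · exact hHG h
      · exact hGu
      · exact hGu.symm
    exact improve H1 hle helem (SimpleGraph.support_mono le_sup_left)
      ⟨u, (hadj v u).2 (Or.inr (Or.inl ⟨rfl, rfl⟩))⟩
  have E2 : ∀ u u', G.Adj v u → G.Adj v u' → ¬ H.Adj u u' := by
    intro u u' hGu hGu' haduu
    have hvu : v ≠ u := G.ne_of_adj hGu
    have hvu' : v ≠ u' := G.ne_of_adj hGu'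
    have huu' : u ≠ u' := H.ne_of_adj haduu
    have huv : u ≠ v := hvu.symm
    have hu'v : u' ≠ v := hvu'.symm
    have hu'u : u' ≠ u := huu'.symm
    have hu : u ∈ H.support := E1 u hGu
    have hu' : u' ∈ H.support := E1 u' hGu'
    have hdub : (H.neighborSet u).ncard ≤ 2 := hel.1 u
    have hdup : 0 < (H.neighborSet u).ncard := stmt9_deg_pos hu
    by_cases hdu : (H.neighborSet u).ncard = 1
    · -- both endpoints have degree 1: add the triangle v,u,u'
      have hdu' : (H.neighborSet u').ncard = 1 := hel.2 u hdu u' haduu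
      have hnu : H.neighborSet u = {u'} := by
        obtain ⟨a, ha⟩ := Set.ncard_eq_one.1 hdu
        have hm : u' ∈ H.neighborSet u := haduu
        rw [ha, Set.mem_singleton_iff] at hm
        rw [ha, hm]
      have hnu' : H.neighborSet u' = {u} := by
        obtain ⟨a, ha⟩ := Set.ncard_eq_one.1 hdu'
        have hm : u ∈ H.neighborSet u' := haduu.symm
        rw [ha, Set.mem_singleton_iff] at hm
        rw [ha, hm]
      set H1 := H ⊔ SimpleGraph.fromEdgeSet {s(v,u), s(v,u')} with hH1
      have hadj : ∀ a b, H1.Adj a b ↔ H.Adj a b ∨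
          (a = v ∧ b = u) ∨ (a = u ∧ b = v) ∨ (a = v ∧ b = u') ∨ (a = u' ∧ b = v) := by
        intro a b
        simp only [hH1, SimpleGraph.sup_adj, SimpleGraph.fromEdgeSet_adj,
          Set.mem_insert_iff, Set.mem_singleton_iff, Sym2.eq_iff]
        constructor
        · rintro (h | ⟨(⟨rfl,rfl⟩|⟨rfl,rfl⟩)|(⟨rfl,rfl⟩|⟨rfl,rfl⟩), hne⟩) <;> tauto
        · rintro (h | ⟨rfl,rfl⟩ | ⟨rfl,rfl⟩ | ⟨rfl,rfl⟩ | ⟨rfl,rfl⟩)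
          · tauto
          · exact Or.inr ⟨by tauto, hvu⟩
          · exact Or.inr ⟨by tauto, hvu.symm⟩
          · exact Or.inr ⟨by tauto, hvu'⟩
          · exact Or.inr ⟨by tauto, hvu'.symm⟩
      have hnbv : H1.neighborSet v = {u, u'} := by
        ext x
        simp only [SimpleGraph.mem_neighborSet, hadj, Set.mem_insert_iff, Set.mem_singleton_iff]
        constructor
        · rintro (h | ⟨_,rfl⟩ | ⟨h,_⟩ | ⟨_,rfl⟩ | ⟨h,_⟩)
          · exact absurd h (hvadj x)
          · tauto
          · exact absurd h hvu
          · tauto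
          · exact absurd h hvu'
        · rintro (rfl | rfl) <;> tauto
      have hnbu1 : H1.neighborSet u = {u', v} := by
        ext x
        simp only [SimpleGraph.mem_neighborSet, hadj, Set.mem_insert_iff, Set.mem_singleton_iff]
        constructor
        · rintro (h | ⟨h,_⟩ | ⟨_,rfl⟩ | ⟨h,_⟩ | ⟨h,_⟩)
          · have hm : x ∈ H.neighborSet u := h
            rw [hnu, Set.mem_singleton_iff] at hm
            tauto
          · exact absurd h huv
          · tauto
          · exact absurd h huv
          · exact absurd h huu'
        · rintro (rfl | rfl)
          · exact Or.inl haduu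
          · tauto
      have hnbu'1 : H1.neighborSet u' = {u, v} := by
        ext x
        simp only [SimpleGraph.mem_neighborSet, hadj, Set.mem_insert_iff, Set.mem_singleton_iff]
        constructor
        · rintro (h | ⟨h,_⟩ | ⟨h,_⟩ | ⟨h,_⟩ | ⟨_,rfl⟩)
          · have hm : x ∈ H.neighborSet u' := h
            rw [hnu', Set.mem_singleton_iff] at hm
            tauto
          · exact absurd h hu'v
          · exact absurd h hu'u
          · exact absurd h hu'v
          · tauto
        · rintro (rfl | rfl)
          · exact Or.inl haduu.symm
          · tauto
      have hnbo : ∀ w, w ≠ v → w ≠ u → w ≠ u' → H1.neighborSet w = H.neighborSet w := by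
        intro w hwv hwu hwu'
        ext x
        simp only [SimpleGraph.mem_neighborSet, hadj]
        constructor
        · rintro (h | ⟨rfl,_⟩ | ⟨rfl,_⟩ | ⟨rfl,_⟩ | ⟨rfl,_⟩) <;> tauto
        · exact fun h => Or.inl h
      have hne1 : u' ≠ v := hvu'.symm
      have hne2 : u ≠ v := hvu.symm
      have helem : IsElementary H1 := by
        constructor
        · intro w
          by_cases hwv : w = v
          · rw [hwv, hnbv]; exact (Set.ncard_pair huu').le
          by_cases hwu : w = u
          · rw [hwu, hnbu1]; exact (Set.ncard_pair hne1).le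
          by_cases hwu' : w = u'
          · rw [hwu', hnbu'1]; exact (Set.ncard_pair hne2).le
          rw [hnbo w hwv hwu hwu']; exact hel.1 w
        · intro w hw1 x hx
          by_cases hwv : w = v
          · rw [hwv, hnbv, Set.ncard_pair huu'] at hw1; omega
          by_cases hwu : w = u
          · rw [hwu, hnbu1, Set.ncard_pair hne1] at hw1; omega
          by_cases hwu' : w = u'
          · rw [hwu', hnbu'1, Set.ncard_pair hne2] at hw1; omega
          rw [hnbo w hwv hwu hwu'] at hw1
          have hx' : H.Adj w x := by
            rcases (hadj w x).1 hx with h | ⟨rfl,_⟩ | ⟨rfl,_⟩ | ⟨rfl,_⟩ | ⟨rfl,_⟩ <;> tauto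
          have hdx : (H.neighborSet x).ncard = 1 := hel.2 w hw1 x hx'
          have hxv : x ≠ v := fun h => hv ⟨w, (h ▸ hx').symm⟩
          have hxu : x ≠ u := by
            intro h
            rw [h] at hx'
            have hm : w ∈ H.neighborSet u := hx'.symm
            rw [hnu, Set.mem_singleton_iff] at hm
            exact hwu' hm
          have hxu' : x ≠ u' := by
            intro h
            rw [h] at hx'
            have hm : w ∈ H.neighborSet u' := hx'.symm
            rw [hnu', Set.mem_singleton_iff] at hm
            exact hwu hm
          rw [hnbo x hxv hxu hxu']; exact hdx
      have hle : H1 ≤ G := by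
        intro a b hab
        rcases (hadj a b).1 hab with h | ⟨rfl,rfl⟩ | ⟨rfl,rfl⟩ | ⟨rfl,rfl⟩ | ⟨rfl,rfl⟩
        · exact hHG h
        · exact hGu
        · exact hGu.symm
        · exact hGu'
        · exact hGu'.symm
      exact improve H1 hle helem (SimpleGraph.support_mono le_sup_left)
        ⟨u, (hadj v u).2 (by tauto)⟩
    · -- degree-2 case: u, u' on a cycle; reroute the edge uu' through v
      have hdu2 : (H.neighborSet u).ncard = 2 := by omega
      have hdu'2 : (H.neighborSet u').ncard = 2 := stmt9_adj_deg_two hel haduu hdu2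
      obtain ⟨z, hz_ne, hnu⟩ : ∃ z, z ≠ u' ∧ H.neighborSet u = {u', z} := by
        obtain ⟨a, b, hab, hset⟩ := Set.ncard_eq_two.1 hdu2
        have hmem : u' ∈ H.neighborSet u := haduu
        rw [hset] at hmem
        rcases hmem with h | h
        · refine ⟨b, ?_, ?_⟩
          · rw [← h] at hab; exact hab.symm
          · rw [hset, ← h]
        · refine ⟨a, ?_, ?_⟩
          · rw [← h] at hab; exact hab
          · rw [hset, ← h, Set.pair_comm]
      obtain ⟨z', hz'_ne, hnu'⟩ : ∃ z', z' ≠ u ∧ H.neighborSet u' = {u, z'} := by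
        obtain ⟨a, b, hab, hset⟩ := Set.ncard_eq_two.1 hdu'2
        have hmem : u ∈ H.neighborSet u' := haduu.symm
        rw [hset] at hmem
        rcases hmem with h | h
        · refine ⟨b, ?_, ?_⟩
          · rw [← h] at hab; exact hab.symm
          · rw [hset, ← h]
        · refine ⟨a, ?_, ?_⟩
          · rw [← h] at hab; exact hab
          · rw [hset, ← h, Set.pair_comm]
      have hadjz : H.Adj u z := by
        have : z ∈ H.neighborSet u := by rw [hnu]; right; rfl
        exact this
      have hadjz' : H.Adj u' z' := by
        have : z' ∈ H.neighborSet u' := by rw [hnu']; right; rfl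
        exact this
      have hzv : z ≠ v := fun h => hv ⟨u, (h ▸ hadjz).symm⟩
      have hz'v : z' ≠ v := fun h => hv ⟨u', (h ▸ hadjz').symm⟩
      set H2 := (H.deleteEdges {s(u,u')}) ⊔ SimpleGraph.fromEdgeSet {s(v,u), s(v,u')} with hH2
      have hadj : ∀ a b, H2.Adj a b ↔
          (H.Adj a b ∧ ¬((a = u ∧ b = u') ∨ (a = u' ∧ b = u))) ∨
          (a = v ∧ b = u) ∨ (a = u ∧ b = v) ∨ (a = v ∧ b = u') ∨ (a = u' ∧ b = v) := by
        intro a b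
        simp only [hH2, SimpleGraph.sup_adj, SimpleGraph.deleteEdges_adj,
          SimpleGraph.fromEdgeSet_adj, Set.mem_insert_iff, Set.mem_singleton_iff, Sym2.eq_iff]
        constructor
        · rintro (⟨h, hne⟩ | ⟨(⟨rfl,rfl⟩|⟨rfl,rfl⟩)|(⟨rfl,rfl⟩|⟨rfl,rfl⟩), _⟩) <;> tauto
        · rintro (⟨h, hne⟩ | ⟨rfl,rfl⟩ | ⟨rfl,rfl⟩ | ⟨rfl,rfl⟩ | ⟨rfl,rfl⟩)
          · exact Or.inl ⟨h, hne⟩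
          · exact Or.inr ⟨by tauto, hvu⟩
          · exact Or.inr ⟨by tauto, hvu.symm⟩
          · exact Or.inr ⟨by tauto, hvu'⟩
          · exact Or.inr ⟨by tauto, hvu'.symm⟩
      have hnbv : H2.neighborSet v = {u, u'} := by
        ext x
        simp only [SimpleGraph.mem_neighborSet, hadj, Set.mem_insert_iff, Set.mem_singleton_iff]
        constructor
        · rintro (⟨h, _⟩ | ⟨_,rfl⟩ | ⟨h,_⟩ | ⟨_,rfl⟩ | ⟨h,_⟩)
          · exact absurd h (hvadj x)
          · tauto
          · exact absurd h hvu
          · tauto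
          · exact absurd h hvu'
        · rintro (rfl | rfl) <;> tauto
      have hnbu2 : H2.neighborSet u = {z, v} := by
        ext x
        simp only [SimpleGraph.mem_neighborSet, hadj, Set.mem_insert_iff, Set.mem_singleton_iff]
        constructor
        · rintro (⟨h, hne⟩ | ⟨h,_⟩ | ⟨_,rfl⟩ | ⟨h,_⟩ | ⟨h,_⟩)
          · have hm : x ∈ H.neighborSet u := h
            rw [hnu] at hm
            rcases hm with rfl | rfl
            · exact absurd (by tauto) hne
            · tauto
          · exact absurd h huv
          · tauto
          · exact absurd h huv
          · exact absurd h huu'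
        · rintro (rfl | rfl)
          · exact Or.inl ⟨hadjz, by tauto⟩
          · tauto
      have hnbu'2 : H2.neighborSet u' = {z', v} := by
        ext x
        simp only [SimpleGraph.mem_neighborSet, hadj, Set.mem_insert_iff, Set.mem_singleton_iff]
        constructor
        · rintro (⟨h, hne⟩ | ⟨h,_⟩ | ⟨h,_⟩ | ⟨h,_⟩ | ⟨_,rfl⟩)
          · have hm : x ∈ H.neighborSet u' := h
            rw [hnu'] at hm
            rcases hm with rfl | rfl
            · exact absurd (by tauto) hne
            · tauto
          · exact absurd h hu'v
          · exact absurd h hu'u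
          · exact absurd h hu'v
          · tauto
        · rintro (rfl | rfl)
          · exact Or.inl ⟨hadjz', by tauto⟩
          · tauto
      have hnbo : ∀ w, w ≠ v → w ≠ u → w ≠ u' → H2.neighborSet w = H.neighborSet w := by
        intro w hwv hwu hwu'
        ext x
        simp only [SimpleGraph.mem_neighborSet, hadj]
        constructor
        · rintro (⟨h, _⟩ | ⟨rfl,_⟩ | ⟨rfl,_⟩ | ⟨rfl,_⟩ | ⟨rfl,_⟩) <;> tauto
        · intro h
          exact Or.inl ⟨h, by rintro (⟨rfl,_⟩|⟨rfl,_⟩) <;> tauto⟩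
      have helem : IsElementary H2 := by
        constructor
        · intro w
          by_cases hwv : w = v
          · rw [hwv, hnbv]; exact (Set.ncard_pair huu').le
          by_cases hwu : w = u
          · rw [hwu, hnbu2]; exact (Set.ncard_pair hzv).le
          by_cases hwu' : w = u'
          · rw [hwu', hnbu'2]; exact (Set.ncard_pair hz'v).le
          rw [hnbo w hwv hwu hwu']; exact hel.1 w
        · intro w hw1 x hx
          by_cases hwv : w = v
          · rw [hwv, hnbv, Set.ncard_pair huu'] at hw1; omega
          by_cases hwu : w = u
          · rw [hwu, hnbu2, Set.ncard_pair hzv] at hw1; omega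
          by_cases hwu' : w = u'
          · rw [hwu', hnbu'2, Set.ncard_pair hz'v] at hw1; omega
          rw [hnbo w hwv hwu hwu'] at hw1
          have hx' : H.Adj w x := by
            rcases (hadj w x).1 hx with ⟨h, _⟩ | ⟨rfl,_⟩ | ⟨rfl,_⟩ | ⟨rfl,_⟩ | ⟨rfl,_⟩ <;> tauto
          have hdx : (H.neighborSet x).ncard = 1 := hel.2 w hw1 x hx'
          have hxv : x ≠ v := fun h => hv ⟨w, (h ▸ hx').symm⟩
          have hxu : x ≠ u := by
            intro h
            rw [h] at hdx
            omega
          have hxu' : x ≠ u' := by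
            intro h
            rw [h] at hdx
            omega
          rw [hnbo x hxv hxu hxu']; exact hdx
      have hle : H2 ≤ G := by
        intro a b hab
        rcases (hadj a b).1 hab with ⟨h, _⟩ | ⟨rfl,rfl⟩ | ⟨rfl,rfl⟩ | ⟨rfl,rfl⟩ | ⟨rfl,rfl⟩
        · exact hHG h
        · exact hGu
        · exact hGu.symm
        · exact hGu'
        · exact hGu'.symm
      have hsub : H.support ⊆ H2.support := by
        intro w hw
        obtain ⟨x, hwx⟩ := hw
        by_cases hwu : w = u
        · exact ⟨v, (hadj w v).2 (by tauto)⟩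
        by_cases hwu' : w = u'
        · exact ⟨v, (hadj w v).2 (by tauto)⟩
        · exact ⟨x, (hadj w x).2 (Or.inl ⟨hwx, by rintro (⟨rfl,_⟩|⟨rfl,_⟩) <;> tauto⟩)⟩
      exact improve H2 hle helem hsub ⟨u, (hadj v u).2 (by tauto)⟩
  -- counting stage
  haveI : Nonempty V := ⟨v⟩
  have hdeg_card : ∀ w : V, (Finset.univ.filter (fun x => H.Adj w x)).card = (H.neighborSet w).ncard := by
    intro w
    rw [Set.ncard_eq_toFinset_card']
    congr 1
    ext x
    simp [SimpleGraph.mem_neighborSet]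
  have hsupcard : H.support.ncard ≤ Fintype.card V := by
    have h := Set.ncard_le_ncard (Set.subset_univ H.support) (Set.toFinite _)
    rwa [Set.ncard_univ, Nat.card_eq_fintype_card] at h
  rw [Nat.sub_sub_self hsupcard]
  set A : Finset V := Finset.univ.filter (fun u => G.Adj v u) with hA
  set S : Finset V := Finset.univ.filter (fun u => u ∈ H.support) with hS
  have hAcard : (G.neighborSet v).ncard = A.card := by
    rw [Set.ncard_eq_toFinset_card']
    congr 1
    ext x
    simp [hA, SimpleGraph.mem_neighborSet]
  have hScard : H.support.ncard = S.card := by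
    rw [Set.ncard_eq_toFinset_card']
    congr 1
    ext x
    simp [hS]
  rw [hAcard, hScard]
  have hmemA : ∀ u, u ∈ A ↔ G.Adj v u := by intro u; simp [hA]
  have hmemS : ∀ u, u ∈ S ↔ u ∈ H.support := by intro u; simp [hS]
  have hAS : A ⊆ S := fun u hu => (hmemS u).2 (E1 u ((hmemA u).1 hu))
  set A1 : Finset V := A.filter (fun u => (H.neighborSet u).ncard = 1) with hA1
  set A2 : Finset V := A.filter (fun u => ¬ (H.neighborSet u).ncard = 1) with hA2
  set T : Finset V := S \ A with hT
  set T1 : Finset V := T.filter (fun t => (H.neighborSet t).ncard = 1) with hT1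
  set T2 : Finset V := T.filter (fun t => (H.neighborSet t).ncard = 2) with hT2
  set f : V → V := fun u => Classical.epsilon (H.Adj u) with hfdef
  have hfadj : ∀ u, u ∈ H.support → H.Adj u (f u) := by
    intro u hu
    have hu' : ∃ w, H.Adj u w := hu
    exact Classical.epsilon_spec hu'
  have hA1T1 : A1.card ≤ T1.card := by
    apply Finset.card_le_card_of_injOn f
    · intro u hu
      rw [hA1, Finset.mem_coe, Finset.mem_filter] at hu
      obtain ⟨huA, hud⟩ := hu
      have huS : u ∈ H.support := E1 u ((hmemA u).1 huA)
      have hadj := hfadj u huS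
      have hfS : f u ∈ H.support := ⟨u, hadj.symm⟩
      have hfnotA : f u ∉ A := fun hfa =>
        E2 u (f u) ((hmemA u).1 huA) ((hmemA (f u)).1 hfa) hadj
      have hfd : (H.neighborSet (f u)).ncard = 1 := hel.2 u hud (f u) hadj
      rw [hT1, Finset.mem_coe, Finset.mem_filter, hT, Finset.mem_sdiff]
      exact ⟨⟨(hmemS _).2 hfS, hfnotA⟩, hfd⟩
    · intro a ha b hb hab
      simp only [Finset.mem_coe, hA1, Finset.mem_filter] at ha hb
      have haS : a ∈ H.support := E1 a ((hmemA a).1 ha.1)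
      have hbS : b ∈ H.support := E1 b ((hmemA b).1 hb.1)
      have h1 : H.Adj (f a) a := (hfadj a haS).symm
      have h2 : H.Adj (f a) b := by rw [hab]; exact (hfadj b hbS).symm
      have hfd : (H.neighborSet (f a)).ncard = 1 := hel.2 a ha.2 (f a) (hfadj a haS)
      exact stmt9_uniq hfd h1 h2
  have hA2mem : ∀ u ∈ A2, (H.neighborSet u).ncard = 2 := by
    intro u hu
    rw [hA2, Finset.mem_filter] at hu
    have huS : u ∈ H.support := E1 u ((hmemA u).1 hu.1)
    have h1 := hel.1 u
    have h2 := stmt9_deg_pos huS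
    have h3 := hu.2
    omega
  have hkey : ∀ t : V, (A2.filter (fun u => H.Adj u t)).card ≤ if t ∈ T2 then 2 else 0 := by
    intro t
    by_cases ht : t ∈ T2
    · rw [if_pos ht]
      have hsub2 : A2.filter (fun u => H.Adj u t) ⊆ Finset.univ.filter (fun x => H.Adj t x) := by
        intro u hu
        rw [Finset.mem_filter] at hu ⊢
        exact ⟨Finset.mem_univ u, hu.2.symm⟩
      have hle2 := Finset.card_le_card hsub2
      rw [hdeg_card t] at hle2
      rw [hT2, Finset.mem_filter] at ht
      omega
    · rw [if_neg ht]
      rw [Nat.le_zero, Finset.card_eq_zero, Finset.filter_eq_empty_iff]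
      intro u hu hadj
      apply ht
      have hu2 : (H.neighborSet u).ncard = 2 := hA2mem u hu
      have huA : u ∈ A := by rw [hA2, Finset.mem_filter] at hu; exact hu.1
      have htS : t ∈ H.support := ⟨u, hadj.symm⟩
      have htnotA : t ∉ A := fun hta => E2 u t ((hmemA u).1 huA) ((hmemA t).1 hta) hadj
      have htd : (H.neighborSet t).ncard = 2 := stmt9_adj_deg_two hel hadj hu2
      rw [hT2, Finset.mem_filter, hT, Finset.mem_sdiff]
      exact ⟨⟨(hmemS t).2 htS, htnotA⟩, htd⟩
  have hA2T2 : A2.card ≤ T2.card := by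
    have h1 : ∀ u ∈ A2, (Finset.univ.filter (fun t => H.Adj u t)).card = 2 := by
      intro u hu
      rw [hdeg_card u]
      exact hA2mem u hu
    have h2 : 2 * A2.card = ∑ u ∈ A2, (Finset.univ.filter (fun t => H.Adj u t)).card := by
      rw [Finset.sum_congr rfl h1, Finset.sum_const, smul_eq_mul, mul_comm]
    have h3 : ∑ u ∈ A2, (Finset.univ.filter (fun t => H.Adj u t)).card
        = ∑ t ∈ Finset.univ, (A2.filter (fun u => H.Adj u t)).card := by
      simp only [Finset.card_filter]
      exact Finset.sum_comm
    have h4 : ∑ t ∈ Finset.univ, (A2.filter (fun u => H.Adj u t)).card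
        ≤ ∑ t ∈ Finset.univ, (if t ∈ T2 then 2 else 0) :=
      Finset.sum_le_sum (fun t _ => hkey t)
    have h5 : ∑ t ∈ Finset.univ, (if t ∈ T2 then (2:ℕ) else 0) = 2 * T2.card := by
      rw [Finset.sum_ite_mem, Finset.univ_inter, Finset.sum_const, smul_eq_mul, mul_comm]
    omega
  have hsplit : A1.card + A2.card = A.card :=
    Finset.card_filter_add_card_filter_not (p := fun u => (H.neighborSet u).ncard = 1)
  have hdisj : Disjoint T1 T2 := by
    rw [Finset.disjoint_left]
    intro t ht1 ht2
    rw [hT1, Finset.mem_filter] at ht1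
    rw [hT2, Finset.mem_filter] at ht2
    omega
  have hTT : T1.card + T2.card ≤ T.card := by
    rw [← Finset.card_union_of_disjoint hdisj]
    exact Finset.card_le_card
      (Finset.union_subset (Finset.filter_subset _ _) (Finset.filter_subset _ _))
  have hTcard : T.card = S.card - A.card := Finset.card_sdiff_of_subset hAS
  have hASle : A.card ≤ S.card := Finset.card_le_card hAS
  omega
end

section
/- If a graph G has a spanning elementary subgraph (a spanning subgraph each of whose components is an edge or a cycle), then γ'_s(G) ≥ 0. -/
open scoped Classical

section Aux
variable {V : Type*} [Fintype V]

lemma aux_mem_edgeFin {G : SimpleGraph V} {e : Sym2 V} : e ∈ edgeFin G ↔ e ∈ G.edgeSet := by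
  simp [edgeFin]

lemma aux_filter_mem_pair {u v : V} (huv : u ≠ v) :
    (Finset.univ.filter (fun w : V => w ∈ s(u, v))) = {u, v} := by
  ext w; simp [Sym2.mem_iff]

lemma aux_handshake (G : SimpleGraph V) (f : Sym2 V → ℤ) :
    ∑ v, vsum G f v = 2 * ∑ e ∈ edgeFin G, f e := by
  unfold vsum
  calc ∑ v, ∑ e ∈ (edgeFin G).filter (fun e => v ∈ e), f e
      = ∑ v : V, ∑ e ∈ edgeFin G, if v ∈ e then f e else 0 := by
        simp [Finset.sum_filter]
    _ = ∑ e ∈ edgeFin G, ∑ v : V, if v ∈ e then f e else 0 := Finset.sum_comm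
    _ = 2 * ∑ e ∈ edgeFin G, f e := by
        rw [Finset.mul_sum]
        apply Finset.sum_congr rfl
        intro e he
        induction e using Sym2.inductionOn with
        | hf a b =>
          have hadj : G.Adj a b := aux_mem_edgeFin.1 he
          rw [← Finset.sum_filter, aux_filter_mem_pair hadj.ne,
            Finset.sum_pair hadj.ne]
          ring

lemma aux_edge_vertex (H : SimpleGraph V) (g : V → ℤ) :
    ∑ e ∈ edgeFin H, ∑ w ∈ Finset.univ.filter (fun w => w ∈ e), g w
      = ∑ w, (H.degree w : ℤ) * g w := by
  calc ∑ e ∈ edgeFin H, ∑ w ∈ Finset.univ.filter (fun w => w ∈ e), g w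
      = ∑ e ∈ edgeFin H, ∑ w : V, if w ∈ e then g w else 0 := by
        simp [Finset.sum_filter]
    _ = ∑ w : V, ∑ e ∈ edgeFin H, if w ∈ e then g w else 0 := Finset.sum_comm
    _ = ∑ w, (H.degree w : ℤ) * g w := by
        apply Finset.sum_congr rfl
        intro w _
        have hfi : (edgeFin H).filter (fun e => w ∈ e) = H.incidenceFinset w := by
          ext e
          simp [edgeFin, SimpleGraph.mem_incidenceFinset, SimpleGraph.incidenceSet]
        rw [← Finset.sum_filter, hfi, Finset.sum_const,
          SimpleGraph.card_incidenceFinset_eq_degree]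
        simp [mul_comm]

lemma aux_deg (H : SimpleGraph V) (w : V) : (H.neighborSet w).ncard = H.degree w := by
  rw [← SimpleGraph.card_neighborFinset_eq_degree, ← Set.ncard_coe_finset (H.neighborFinset w)]
  congr 1
  simp [SimpleGraph.neighborFinset_def]

end Aux

section Aux2
variable {V : Type*} [Fintype V]

lemma aux_key {G : SimpleGraph V} {f : Sym2 V → ℤ} (hf : IsSEDF G f)
    {u v : V} (h : G.Adj u v) :
    1 + f s(u, v) ≤ vsum G f u + vsum G f v := by
  have he : s(u, v) ∈ edgeFin G := aux_mem_edgeFin.2 h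
  have hne : u ≠ v := h.ne
  have hnb : closedNbhd G s(u, v)
      = (edgeFin G).filter (fun e' => u ∈ e') ∪ (edgeFin G).filter (fun e' => v ∈ e') := by
    rw [closedNbhd, ← Finset.filter_or]
    apply Finset.filter_congr
    intro e' _
    simp only [Sym2.mem_iff, eq_iff_iff]
    constructor
    · rintro ⟨w, (rfl | rfl), hw⟩
      · exact Or.inl hw
      · exact Or.inr hw
    · rintro (hw | hw)
      exacts [⟨u, Or.inl rfl, hw⟩, ⟨v, Or.inr rfl, hw⟩]
  have hint : (edgeFin G).filter (fun e' => u ∈ e') ∩ (edgeFin G).filter (fun e' => v ∈ e')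
      = {s(u, v)} := by
    rw [← Finset.filter_and]
    ext e'
    induction e' using Sym2.inductionOn with
    | hf a b =>
      simp only [Finset.mem_filter, Finset.mem_singleton, aux_mem_edgeFin,
        SimpleGraph.mem_edgeSet, Sym2.mem_iff, Sym2.eq_iff]
      constructor
      · rintro ⟨hab, h1, h2⟩
        rcases h1 with h1 | h1 <;> rcases h2 with h2 | h2
        · exact absurd (h1.trans h2.symm) hne
        · exact Or.inl ⟨h1.symm, h2.symm⟩
        · exact Or.inr ⟨h2.symm, h1.symm⟩
        · exact absurd (h1.trans h2.symm) hne
      · rintro (⟨rfl, rfl⟩ | ⟨rfl, rfl⟩)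
        · exact ⟨h, Or.inl rfl, Or.inr rfl⟩
        · exact ⟨h.symm, Or.inr rfl, Or.inl rfl⟩
  have hsum : ∑ e' ∈ closedNbhd G s(u, v), f e'
      = vsum G f u + vsum G f v - f s(u, v) := by
    have hui := Finset.sum_union_inter
      (s₁ := (edgeFin G).filter (fun e' => u ∈ e'))
      (s₂ := (edgeFin G).filter (fun e' => v ∈ e')) (f := f)
    rw [hint, Finset.sum_singleton] at hui
    rw [hnb]
    unfold vsum
    linarith
  have h1 := hf.2 _ he
  rw [hsum] at h1
  linarith

lemma aux_key' {G : SimpleGraph V} {f : Sym2 V → ℤ} (hf : IsSEDF G f)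
    {u v : V} (h : G.Adj u v) :
    0 ≤ vsum G f u + vsum G f v := by
  have h1 := aux_key hf h
  rcases hf.1 _ (aux_mem_edgeFin.2 (G.mem_edgeSet.2 h)) with h2 | h2 <;> rw [h2] at h1 <;> linarith

end Aux2


theorem stmt10 {V : Type*} [Fintype V] (G H : SimpleGraph V) (hHG : H ≤ G)
    (hel : IsElementary H) (hspan : H.support = Set.univ) :
    0 ≤ gammaS G := by
  have main : ∀ z ∈ {z : ℤ | ∃ f, IsSEDF G f ∧ z = ∑ e ∈ edgeFin G, f e}, 0 ≤ z := by
    rintro z ⟨f, hf, rfl⟩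
    set g : V → ℤ := vsum G f with hg
    have hHadjG : ∀ {a b : V}, H.Adj a b → G.Adj a b := fun h => hHG h
    -- degree bounds
    have hdle : ∀ v, H.degree v ≤ 2 := fun v => by rw [← aux_deg]; exact hel.1 v
    have hdge : ∀ v, 1 ≤ H.degree v := by
      intro v
      have hv : v ∈ H.support := by rw [hspan]; trivial
      obtain ⟨w, hw⟩ := hv
      have hpos : 0 < H.degree v := by
        rw [SimpleGraph.degree_pos_iff_exists_adj]; exact ⟨w, hw⟩
      omega
    -- part 1 : edge sum nonneg
    have hpart1 : 0 ≤ ∑ w, (H.degree w : ℤ) * g w := by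
      rw [← aux_edge_vertex]
      apply Finset.sum_nonneg
      intro e he
      induction e using Sym2.inductionOn with
      | hf a b =>
        have hadj : H.Adj a b := aux_mem_edgeFin.1 he
        rw [aux_filter_mem_pair hadj.ne, Finset.sum_pair hadj.ne]
        exact aux_key' hf (hHadjG hadj)
    -- degree-1 vertices and the pairing involution
    set A : Finset V := Finset.univ.filter (fun v => H.degree v = 1) with hA
    have hsig : ∀ v ∈ A, ∃ w, H.neighborFinset v = {w} := by
      intro v hv
      rw [hA, Finset.mem_filter] at hv
      exact Finset.card_eq_one.1 hv.2
    set σ : V → V := fun v =>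
      if h : ∃ w, H.neighborFinset v = {w} then h.choose else v with hσ
    have hσnbr : ∀ v ∈ A, H.neighborFinset v = {σ v} := by
      intro v hv
      have h := hsig v hv
      simp only [hσ, dif_pos h]
      exact h.choose_spec
    have hσadj : ∀ v ∈ A, H.Adj v (σ v) := by
      intro v hv
      have : σ v ∈ H.neighborFinset v := by rw [hσnbr v hv]; simp
      exact (SimpleGraph.mem_neighborFinset _ _ _).1 this
    have hσA : ∀ v ∈ A, σ v ∈ A := by
      intro v hv
      have hv1 : H.degree v = 1 := (Finset.mem_filter.1 hv).2
      have : (H.neighborSet (σ v)).ncard = 1 := by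
        apply hel.2 v _ _ (hσadj v hv)
        rw [aux_deg]; exact hv1
      rw [hA, Finset.mem_filter]
      exact ⟨Finset.mem_univ _, by rw [← aux_deg]; exact this⟩
    have hσσ : ∀ v ∈ A, σ (σ v) = v := by
      intro v hv
      have hmem : v ∈ H.neighborFinset (σ v) :=
        (SimpleGraph.mem_neighborFinset _ _ _).2 (hσadj v hv).symm
      rw [hσnbr (σ v) (hσA v hv), Finset.mem_singleton] at hmem
      exact hmem.symm
    have hsumA : 0 ≤ ∑ v ∈ A, g v := by
      have heq : ∑ v ∈ A, g v = ∑ v ∈ A, g (σ v) :=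
        Finset.sum_nbij' σ σ hσA hσA hσσ hσσ (fun a ha => by rw [hσσ a ha])
      have h2 : 0 ≤ ∑ v ∈ A, (g v + g (σ v)) :=
        Finset.sum_nonneg fun v hv => aux_key' hf (hHadjG (hσadj v hv))
      rw [Finset.sum_add_distrib, ← heq] at h2
      linarith
    -- splitting the degree sum
    have hsplit : ∑ w, (H.degree w : ℤ) * g w = 2 * ∑ w, g w - ∑ v ∈ A, g v := by
      rw [Finset.mul_sum, hA, Finset.sum_filter, ← Finset.sum_sub_distrib]
      apply Finset.sum_congr rfl
      intro w _
      have h1 := hdge w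
      have h2 := hdle w
      have : H.degree w = 1 ∨ H.degree w = 2 := by omega
      rcases this with h | h <;> rw [h] <;> simp <;> ring
    have hG := aux_handshake G f
    have hgsum : ∑ v, g v = 2 * ∑ e ∈ edgeFin G, f e := hG
    linarith [hpart1, hsumA, hsplit]
  unfold gammaS
  by_cases hS : Set.Nonempty {z : ℤ | ∃ f, IsSEDF G f ∧ z = ∑ e ∈ edgeFin G, f e}
  · exact le_csInf hS main
  · rw [Set.not_nonempty_iff_eq_empty.1 hS, Int.csInf_empty]
end

section
/- If a graph G has a perfect matching, then γ'_s(G) ≥ 0. -/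
open scoped Classical

lemma sedf_key {V : Type*} [Fintype V] (G : SimpleGraph V)
    (M : G.Subgraph) (hM : M.IsPerfectMatching)
    (f : Sym2 V → ℤ) (hf : IsSEDF G f) :
    0 ≤ ∑ e ∈ edgeFin G, f e := by
  classical
  obtain ⟨hmatch, hspan⟩ := hM
  choose other hadj huniq using fun v => hmatch (hspan v)
  -- uniqueness of matching edge containing a vertex
  have huniqe : ∀ m ∈ M.edgeSet, ∀ v ∈ m, m = s(v, other v) := by
    have base : ∀ (a b : V), M.Adj a b → ∀ v ∈ s(a, b), s(a, b) = s(v, other v) := by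
      intro a b hm v hv
      rw [Sym2.mem_iff] at hv
      rcases hv with rfl | rfl
      · rw [huniq v b hm]
      · rw [huniq v a hm.symm]
        exact Sym2.eq_swap
    intro m hm
    induction m using Sym2.ind with
    | _ a b => exact base a b (SimpleGraph.Subgraph.mem_edgeSet.mp hm)
  set MF := (edgeFin G).filter (fun m => m ∈ M.edgeSet) with hMF
  have hMFsub : MF ⊆ edgeFin G := Finset.filter_subset _ _
  have hmemA : ∀ v, s(v, other v) ∈ edgeFin G := by
    intro v
    simp only [edgeFin, Finset.mem_filter, Finset.mem_univ, true_and]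
    exact M.edgeSet_subset (hadj v)
  have hmemMF : ∀ v, s(v, other v) ∈ MF := by
    intro v
    simp only [hMF, Finset.mem_filter]
    exact ⟨hmemA v, hadj v⟩
  -- counting lemma
  have hcard : ∀ e' ∈ edgeFin G,
      (MF.filter (fun m => ∃ v, v ∈ m ∧ v ∈ e')).card
        = if e' ∈ M.edgeSet then 1 else 2 := by
    intro e' he'
    induction e' using Sym2.ind with
    | _ a b =>
      have hGab : G.Adj a b := by
        simpa [edgeFin, SimpleGraph.mem_edgeSet] using he'
      have hab : a ≠ b := hGab.ne
      have hset : MF.filter (fun m => ∃ v, v ∈ m ∧ v ∈ s(a, b))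
          = {s(a, other a), s(b, other b)} := by
        ext m
        simp only [Finset.mem_filter, Finset.mem_insert, Finset.mem_singleton]
        constructor
        · rintro ⟨hmMF, v, hvm, hve⟩
          have hmM : m ∈ M.edgeSet := (Finset.mem_filter.mp hmMF).2
          rw [Sym2.mem_iff] at hve
          rcases hve with rfl | rfl
          · exact Or.inl (huniqe m hmM v hvm)
          · exact Or.inr (huniqe m hmM v hvm)
        · rintro (rfl | rfl)
          · exact ⟨hmemMF a, a, Sym2.mem_mk_left a _, Sym2.mem_mk_left a b⟩
          · exact ⟨hmemMF b, b, Sym2.mem_mk_left b _, Sym2.mem_mk_right a b⟩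
      rw [hset]
      by_cases hM' : s(a, b) ∈ M.edgeSet
      · have h1 : other a = b := (huniq a b (SimpleGraph.Subgraph.mem_edgeSet.mp hM')).symm
        have h2 : other b = a :=
          (huniq b a (SimpleGraph.Subgraph.mem_edgeSet.mp hM').symm).symm
        rw [if_pos hM', h1, h2, Sym2.eq_swap]
        simp
      · rw [if_neg hM']
        refine Finset.card_pair ?_
        intro heq
        have hb : b ∈ s(a, other a) := by
          rw [heq]; exact Sym2.mem_mk_left b _
        rw [Sym2.mem_iff] at hb
        rcases hb with rfl | rfl
        · exact hab rfl
        · exact hM' (SimpleGraph.Subgraph.mem_edgeSet.mpr (hadj a))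
  -- the double sum
  have hswap : ∑ m ∈ MF, ∑ e' ∈ closedNbhd G m, f e'
      = ∑ e' ∈ edgeFin G,
          ((MF.filter (fun m => ∃ v, v ∈ m ∧ v ∈ e')).card : ℤ) * f e' := by
    calc ∑ m ∈ MF, ∑ e' ∈ closedNbhd G m, f e'
        = ∑ m ∈ MF, ∑ e' ∈ edgeFin G,
            if (∃ v, v ∈ m ∧ v ∈ e') then f e' else 0 := by
          refine Finset.sum_congr rfl fun m _ => ?_
          rw [closedNbhd, Finset.sum_filter]
      _ = ∑ e' ∈ edgeFin G, ∑ m ∈ MF,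
            if (∃ v, v ∈ m ∧ v ∈ e') then f e' else 0 := Finset.sum_comm
      _ = _ := by
          refine Finset.sum_congr rfl fun e' _ => ?_
          rw [← Finset.sum_filter, Finset.sum_const, nsmul_eq_mul]
  -- lower bound from SEDF condition
  have hlow : (MF.card : ℤ) ≤ ∑ m ∈ MF, ∑ e' ∈ closedNbhd G m, f e' := by
    calc (MF.card : ℤ) = ∑ _m ∈ MF, (1 : ℤ) := by simp
      _ ≤ _ := Finset.sum_le_sum fun m hm => hf.2 m (hMFsub hm)
  -- rewrite the counted sum
  have hsum : ∑ e' ∈ edgeFin G,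
      ((MF.filter (fun m => ∃ v, v ∈ m ∧ v ∈ e')).card : ℤ) * f e'
      = 2 * (∑ e ∈ edgeFin G, f e) - ∑ e ∈ MF, f e := by
    have step : ∀ e' ∈ edgeFin G,
        ((MF.filter (fun m => ∃ v, v ∈ m ∧ v ∈ e')).card : ℤ) * f e'
        = 2 * f e' - (if e' ∈ M.edgeSet then f e' else 0) := by
      intro e' he'
      rw [hcard e' he']
      split_ifs with h
      · push_cast; ring
      · push_cast; ring
    rw [Finset.sum_congr rfl step, Finset.sum_sub_distrib, ← Finset.mul_sum,
      ← Finset.sum_filter]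
  have hMFlow : -(MF.card : ℤ) ≤ ∑ e ∈ MF, f e := by
    calc -(MF.card : ℤ) = ∑ _m ∈ MF, (-1 : ℤ) := by simp
      _ ≤ _ := Finset.sum_le_sum fun m hm => by
          rcases hf.1 m (hMFsub hm) with h | h <;> simp [h]
  rw [hswap, hsum] at hlow
  linarith

theorem stmt11 {V : Type*} [Fintype V] (G : SimpleGraph V)
    (hpm : ∃ M : G.Subgraph, M.IsPerfectMatching) :
    0 ≤ gammaS G := by
  obtain ⟨M, hM⟩ := hpm
  have hne : {z : ℤ | ∃ f, IsSEDF G f ∧ z = ∑ e ∈ edgeFin G, f e}.Nonempty := by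
    refine ⟨∑ e ∈ edgeFin G, (1 : ℤ), fun _ => 1, ⟨fun e _ => Or.inl rfl, ?_⟩, rfl⟩
    intro e he
    have hmem : e ∈ closedNbhd G e := by
      rw [closedNbhd, Finset.mem_filter]
      refine ⟨he, ?_⟩
      induction e using Sym2.ind with
      | _ a b => exact ⟨a, Sym2.mem_mk_left a b, Sym2.mem_mk_left a b⟩
    have hpos : 0 < (closedNbhd G e).card := Finset.card_pos.mpr ⟨e, hmem⟩
    simpa using (by exact_mod_cast hpos : (1 : ℤ) ≤ (closedNbhd G e).card)
  refine le_csInf hne ?_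
  rintro z ⟨f, hf, rfl⟩
  exact sedf_key G M hM f hf
end
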